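/- arXiv:2008.10371 — 3 statements merged into one kernel-verified Lean document; each statement's English description precedes it below -/
import Mathlib

section
/- The chain A₂ = Σ_{σ ∈ Σ₄} sgn(σ) · (e₁ − e_{σ(3)}) · (h_{1,σ(1)} − h_{1,1}) · (h_{2,σ(2)} − h_{2,1}) in the Świątkowski complex of the theta graph Θ₄ satisfies ∂A₂ = 0. -/
/-!
A combinatorial model of the Świątkowski chain complex of a finite graph
(finite CW-complex of dimension ≤ 1), computing the homology of its unordered
configuration spaces (An–Drummond-Cole–Knudsen).

A graph is given by a vertex type `V`, an edge type `E` and an endpoint map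
`ends : E → V × V` (self-loops and multiple edges are allowed).  A half-edge is
a pair `(e, b) : E × Bool`, whose vertex is the corresponding endpoint of `e`.

We work with the ℤ-basis of the Świątkowski complex consisting of a monomial
`m : E →₀ ℕ` in the edges together with a choice, for each vertex `v`, of a
local generator from `S(v) = ℤ⟨∅, v, h ∈ H(v)⟩`: a half-edge at `v`
(`Sum.inl`), the vertex itself (`Sum.inr true`), or `∅` (`Sum.inr false`).
The differential is the ℤ[E]-linear derivation with `∂h = e(h) - v(h)`,
with Koszul signs determined by a fixed enumeration of the vertices.
`degB` is the homological degree (number of half-edge factors) and `wtB` is the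
weight (number of particles).  `hasDW i k` is the subgroup of chains of pure
degree `i` and weight `k`; `cyc i k` the corresponding cycles, `bdry i k` the
boundaries of degree/weight `(i+1, k)` chains, and `Hgr i k` their quotient,
which is `H_i(B_k Γ)`.  `stab e` is edge stabilization (multiplication by `e`).
-/

namespace Swiatkowski

variable {V E : Type} [Fintype V] [Fintype E] [DecidableEq V] [DecidableEq E]

/-- The vertex of a half-edge. -/
def vtx (ends : E → V × V) (h : E × Bool) : V :=
  cond h.2 (ends h.1).2 (ends h.1).1

/-- The local generators at a vertex `v`: a half-edge at `v`, or the vertex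
generator (`true`), or `∅` (`false`). -/
abbrev VGen (ends : E → V × V) (v : V) : Type :=
  {h : E × Bool // vtx ends h = v} ⊕ Bool

/-- A choice of local generator at every vertex. -/
abbrev States (ends : E → V × V) : Type := ∀ v : V, VGen ends v

/-- The ℤ-basis of the Świątkowski complex: an edge monomial together with a
state. -/
abbrev Bas (ends : E → V × V) : Type := (E →₀ ℕ) × States ends

/-- The underlying ℤ-module of the Świątkowski complex. -/
abbrev SC (ends : E → V × V) : Type := Bas ends →₀ ℤ

variable (ends : E → V × V)

/-- An enumeration of the vertices, used for Koszul signs. -/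
noncomputable def idx : V → ℕ := fun v => ((Fintype.equivFin V) v : ℕ)

/-- The Koszul sign of the half-edge slot at `v` inside the state `f`. -/
noncomputable def sgn (f : States ends) (v : V) : ℤ :=
  (-1) ^ (Finset.univ.filter fun w => idx w < idx v ∧ (f w).isLeft = true).card

/-- Homological degree of a basis element: its number of half-edge factors. -/
def degB (b : Bas ends) : ℕ :=
  (Finset.univ.filter fun v => (b.2 v).isLeft = true).card

/-- Weight (particle number) of a basis element. -/
def wtB (b : Bas ends) : ℕ :=
  (b.1.sum fun _ n => n) + ∑ v : V, Sum.elim (fun _ => 1) (fun t => cond t 1 0) (b.2 v)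

/-- Value of the differential on a basis element: the signed sum over the
half-edge slots `h` of the substitutions `h ↦ e(h)` and `h ↦ v(h)`. -/
noncomputable def Db (b : Bas ends) : SC ends :=
  ∑ v : V,
    (match b.2 v with
      | Sum.inl h =>
          sgn ends b.2 v •
            (Finsupp.single (b.1 + Finsupp.single h.1.1 1,
                Function.update b.2 v (Sum.inr false)) (1 : ℤ)
              - Finsupp.single (b.1, Function.update b.2 v (Sum.inr true)) (1 : ℤ))
      | Sum.inr _ => 0)

/-- The differential of the Świątkowski complex. -/
noncomputable def D : SC ends →ₗ[ℤ] SC ends :=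
  Finsupp.linearCombination ℤ (Db ends)

/-- The subgroup of chains of pure homological degree `i` and weight `k`. -/
noncomputable def hasDW (i k : ℕ) : Submodule ℤ (SC ends) where
  carrier := {x | ∀ b ∈ x.support, degB ends b = i ∧ wtB ends b = k}
  add_mem' := by
    intro x y hx hy b hb
    rcases Finset.mem_union.mp (Finsupp.support_add hb) with h | h
    exacts [hx b h, hy b h]
  zero_mem' := by simp
  smul_mem' := by
    intro c x hx b hb
    exact hx b (Finsupp.support_smul hb)

/-- Cycles of degree `i` and weight `k`. -/
noncomputable def cyc (i k : ℕ) : Submodule ℤ (SC ends) := LinearMap.ker (D ends) ⊓ hasDW ends i k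

/-- Boundaries of degree `i` and weight `k` chains. -/
noncomputable def bdry (i k : ℕ) : Submodule ℤ (SC ends) := Submodule.map (D ends) (hasDW ends (i + 1) k)

/-- The homology `H_i(B_k Γ)` of the weight-`k` Świątkowski complex. -/
noncomputable def Hgr (i k : ℕ) :=
  cyc ends i k ⧸ Submodule.comap (cyc ends i k).subtype (bdry ends i k)

noncomputable instance (i k : ℕ) : AddCommGroup (Hgr ends i k) :=
  inferInstanceAs (AddCommGroup
    (cyc ends i k ⧸ Submodule.comap (cyc ends i k).subtype (bdry ends i k)))

/-- Edge stabilization: multiplication by the edge `e`. -/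
noncomputable def stab (e : E) : SC ends →ₗ[ℤ] SC ends :=
  Finsupp.lmapDomain ℤ ℤ fun b => (b.1 + Finsupp.single e 1, b.2)

end Swiatkowski

namespace Theta4

open Swiatkowski

/-- The theta graph `Θ₄`: two vertices (`false` and `true`) joined by four
edges. -/
def ends : Fin 4 → Bool × Bool := fun _ => (false, true)

/-- The state placing the half-edge of edge `a` at the first vertex, the
half-edge of edge `b` at the second vertex (the chain `h_{1,a} · h_{2,b}`). -/
def state2 (a b : Fin 4) : States ends := fun v =>
  match v with
  | false => Sum.inl ⟨(a, false), rfl⟩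
  | true => Sum.inl ⟨(b, true), rfl⟩

/-- The basis chain `h_{1,a} ⊗ h_{2,b}` of the Świątkowski complex of `Θ₄`. -/
noncomputable def hh (a b : Fin 4) : SC ends :=
  Finsupp.single ((0 : Fin 4 →₀ ℕ), state2 a b) (1 : ℤ)

/-- The chain
`A₂ = Σ_{σ ∈ Σ₄} sgn(σ) (e₁ − e_{σ(3)})(h_{1,σ(1)} − h_{1,1})(h_{2,σ(2)} − h_{2,1})`
in the Świątkowski complex of `Θ₄` (indices shifted to start at `0`). -/
noncomputable def A2 : SC ends :=
  ∑ σ : Equiv.Perm (Fin 4),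
    ((Equiv.Perm.sign σ : ℤˣ) : ℤ) •
      ((stab ends 0 - stab ends (σ 2))
        (hh (σ 0) (σ 1) - hh 0 (σ 1) - hh (σ 0) 0 + hh 0 0))


/-! ### Auxiliary machinery for the proof -/

open Finsupp Equiv Equiv.Perm Finset

/-- The sign of the half-edge slot at the first vertex (depends on the chosen
vertex enumeration, but is the same for all the states we use). -/
noncomputable def sg : ℤ := sgn ends (state2 0 0) false

/-- State: `∅`/vertex at the first vertex, half-edge `b` at the second. -/
def sAs (b : Fin 4) (t : Bool) : States ends := fun v =>
  match v with
  | false => Sum.inr t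
  | true => Sum.inl ⟨(b, true), rfl⟩

/-- State: half-edge `a` at the first vertex, `∅`/vertex at the second. -/
def sBs (a : Fin 4) (t : Bool) : States ends := fun v =>
  match v with
  | false => Sum.inl ⟨(a, false), rfl⟩
  | true => Sum.inr t

lemma update_false (a b : Fin 4) (t : Bool) :
    Function.update (state2 a b) false (Sum.inr t) = sAs b t := by
  funext v; cases v <;> simp [Function.update, sAs, state2]

lemma update_true (a b : Fin 4) (t : Bool) :
    Function.update (state2 a b) true (Sum.inr t) = sBs a t := by
  funext v; cases v <;> simp [Function.update, sBs, state2]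

lemma idx_ne : idx (false : Bool) ≠ idx (true : Bool) := by
  intro h; exact Bool.false_ne_true ((Fintype.equivFin _).injective (Fin.val_injective h))

lemma sgn_state2_false (a b : Fin 4) : sgn ends (state2 a b) false = sg := by
  unfold sg Swiatkowski.sgn
  rw [Finset.card_filter, Finset.card_filter, Fintype.sum_bool, Fintype.sum_bool]
  norm_num [state2]

lemma sgn_state2_true (a b : Fin 4) : sgn ends (state2 a b) true = -sg := by
  unfold sg Swiatkowski.sgn
  rw [Finset.card_filter, Finset.card_filter, Fintype.sum_bool, Fintype.sum_bool]
  rcases lt_or_gt_of_ne idx_ne with h | h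
  · norm_num [state2, h, h.asymm]
  · norm_num [state2, h, h.asymm]

lemma Db_state2 (m : Fin 4 →₀ ℕ) (a b : Fin 4) :
    Db ends (m, state2 a b) =
      sg • ((Finsupp.single (m + Finsupp.single a 1, sAs b false) (1 : ℤ)
              - Finsupp.single (m, sAs b true) (1 : ℤ))
            - (Finsupp.single (m + Finsupp.single b 1, sBs a false) (1 : ℤ)
              - Finsupp.single (m, sBs a true) (1 : ℤ))) := by
  rw [Swiatkowski.Db, Fintype.sum_bool]
  show sgn ends (state2 a b) true •
        (Finsupp.single (m + Finsupp.single b 1,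
            Function.update (state2 a b) true (Sum.inr false)) (1 : ℤ)
          - Finsupp.single (m, Function.update (state2 a b) true (Sum.inr true)) (1 : ℤ))
      + sgn ends (state2 a b) false •
        (Finsupp.single (m + Finsupp.single a 1,
            Function.update (state2 a b) false (Sum.inr false)) (1 : ℤ)
          - Finsupp.single (m, Function.update (state2 a b) false (Sum.inr true)) (1 : ℤ)) = _
  rw [sgn_state2_true, sgn_state2_false, update_true, update_true, update_false, update_false]
  module

/-- The full value of `∂` on `e_x · h_{1,a} · h_{2,b}` (up to the global sign `sg`). -/
noncomputable def dfull (x a b : Fin 4) : SC ends :=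
  (Finsupp.single (Finsupp.single x 1 + Finsupp.single a 1, sAs b false) (1 : ℤ)
      - Finsupp.single (Finsupp.single x 1, sAs b true) (1 : ℤ))
    - (Finsupp.single (Finsupp.single x 1 + Finsupp.single b 1, sBs a false) (1 : ℤ)
      - Finsupp.single (Finsupp.single x 1, sBs a true) (1 : ℤ))

lemma stab_single (e : Fin 4) (p : Bas ends) (c : ℤ) :
    stab ends e (Finsupp.single p c)
      = Finsupp.single (p.1 + Finsupp.single e 1, p.2) c := by
  simp [Swiatkowski.stab, Finsupp.lmapDomain_apply, Finsupp.mapDomain_single]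

lemma D_single (p : Bas ends) : D ends (Finsupp.single p (1 : ℤ)) = Db ends p := by
  rw [Swiatkowski.D, Finsupp.linearCombination_single, one_smul]

lemma D_stab_hh (e a b : Fin 4) :
    D ends (stab ends e (hh a b)) = sg • dfull e a b := by
  rw [hh, stab_single]
  show D ends (Finsupp.single ((0 : Fin 4 →₀ ℕ) + Finsupp.single e 1, state2 a b) 1) = _
  rw [zero_add, D_single, Db_state2, dfull]

/-- The value of `∂A₂` term-by-term (up to the global sign `sg`). -/
noncomputable def Bfun (σ : Equiv.Perm (Fin 4)) : SC ends :=
  (dfull 0 (σ 0) (σ 1) - dfull 0 0 (σ 1) - dfull 0 (σ 0) 0 + dfull 0 0 0)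
    - (dfull (σ 2) (σ 0) (σ 1) - dfull (σ 2) 0 (σ 1) - dfull (σ 2) (σ 0) 0
        + dfull (σ 2) 0 0)

lemma D_A2_step (σ : Equiv.Perm (Fin 4)) :
    D ends (((Equiv.Perm.sign σ : ℤˣ) : ℤ) •
        ((stab ends 0 - stab ends (σ 2))
          (hh (σ 0) (σ 1) - hh 0 (σ 1) - hh (σ 0) 0 + hh 0 0)))
      = sg • (((Equiv.Perm.sign σ : ℤˣ) : ℤ) • Bfun σ) := by
  simp only [map_smul, LinearMap.sub_apply, map_sub, map_add, D_stab_hh, Bfun]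
  module

/-- The basic sign-reversing-involution cancellation. -/
lemma sum_sign_smul_eq_zero (f : Equiv.Perm (Fin 4) → SC ends) (i j : Fin 4)
    (hij : i ≠ j) (hf : ∀ σ, f (σ * Equiv.swap i j) = f σ) :
    ∑ σ : Equiv.Perm (Fin 4), ((Equiv.Perm.sign σ : ℤˣ) : ℤ) • f σ = 0 := by
  set S := ∑ σ : Equiv.Perm (Fin 4), ((Equiv.Perm.sign σ : ℤˣ) : ℤ) • f σ with hS
  have h1 : S = ∑ σ : Equiv.Perm (Fin 4),
      ((Equiv.Perm.sign (σ * Equiv.swap i j) : ℤˣ) : ℤ) • f (σ * Equiv.swap i j) :=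
    (Equiv.sum_comp (Equiv.mulRight (Equiv.swap i j))
      (fun σ => ((Equiv.Perm.sign σ : ℤˣ) : ℤ) • f σ)).symm
  have h2 : ∀ σ : Equiv.Perm (Fin 4),
      ((Equiv.Perm.sign (σ * Equiv.swap i j) : ℤˣ) : ℤ) • f (σ * Equiv.swap i j)
        = -(((Equiv.Perm.sign σ : ℤˣ) : ℤ) • f σ) := by
    intro σ
    rw [hf, map_mul, Equiv.Perm.sign_swap hij]
    push_cast
    rw [mul_neg_one, neg_smul]
  have h3 : S = -S := by
    nth_rewrite 1 [h1]
    rw [Finset.sum_congr rfl fun σ _ => h2 σ, Finset.sum_neg_distrib]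
  ext p
  have := congrArg (fun x : SC ends => x p) h3
  simp only [Finsupp.neg_apply] at this
  simp only [Finsupp.coe_zero, Pi.zero_apply]
  omega

/-! The five groups of terms of `∂A₂`, each invariant under right
multiplication by a suitable transposition. -/

noncomputable def P1 (σ : Equiv.Perm (Fin 4)) : SC ends :=
  dfull 0 (σ 0) (σ 1) - dfull 0 0 (σ 1) - dfull 0 (σ 0) 0 + dfull 0 0 0

noncomputable def P02 (σ : Equiv.Perm (Fin 4)) : SC ends :=
  -Finsupp.single (Finsupp.single (σ 2) 1 + Finsupp.single (σ 0) 1, sAs (σ 1) false) (1 : ℤ)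
    + Finsupp.single (Finsupp.single (σ 2) 1 + Finsupp.single (σ 0) 1, sAs 0 false) (1 : ℤ)

noncomputable def P03 (σ : Equiv.Perm (Fin 4)) : SC ends :=
  Finsupp.single (Finsupp.single (σ 2) 1 + Finsupp.single 0 1, sAs (σ 1) false) (1 : ℤ)
    - Finsupp.single (Finsupp.single (σ 2) 1 + Finsupp.single 0 1, sAs 0 false) (1 : ℤ)

noncomputable def P12 (σ : Equiv.Perm (Fin 4)) : SC ends :=
  Finsupp.single (Finsupp.single (σ 2) 1 + Finsupp.single (σ 1) 1, sBs (σ 0) false) (1 : ℤ)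
    - Finsupp.single (Finsupp.single (σ 2) 1 + Finsupp.single (σ 1) 1, sBs 0 false) (1 : ℤ)

noncomputable def P13 (σ : Equiv.Perm (Fin 4)) : SC ends :=
  -Finsupp.single (Finsupp.single (σ 2) 1 + Finsupp.single 0 1, sBs (σ 0) false) (1 : ℤ)
    + Finsupp.single (Finsupp.single (σ 2) 1 + Finsupp.single 0 1, sBs 0 false) (1 : ℤ)

lemma Bfun_decomp (σ : Equiv.Perm (Fin 4)) :
    Bfun σ = P1 σ + P02 σ + P03 σ + P12 σ + P13 σ := by
  simp only [Bfun, P1, P02, P03, P12, P13, dfull]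
  abel

lemma hP1 : ∀ σ : Equiv.Perm (Fin 4), P1 (σ * Equiv.swap 2 3) = P1 σ := by
  intro σ
  have h0 : Equiv.swap (2 : Fin 4) 3 0 = 0 := by decide
  have h1 : Equiv.swap (2 : Fin 4) 3 1 = 1 := by decide
  simp only [P1, Equiv.Perm.mul_apply, h0, h1]

lemma hP02 : ∀ σ : Equiv.Perm (Fin 4), P02 (σ * Equiv.swap 0 2) = P02 σ := by
  intro σ
  have h0 : Equiv.swap (0 : Fin 4) 2 0 = 2 := by decide
  have h1 : Equiv.swap (0 : Fin 4) 2 1 = 1 := by decide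
  have h2 : Equiv.swap (0 : Fin 4) 2 2 = 0 := by decide
  simp only [P02, Equiv.Perm.mul_apply, h0, h1, h2]
  rw [add_comm (Finsupp.single (σ 0) (1 : ℕ)) (Finsupp.single (σ 2) (1 : ℕ))]

lemma hP03 : ∀ σ : Equiv.Perm (Fin 4), P03 (σ * Equiv.swap 0 3) = P03 σ := by
  intro σ
  have h1 : Equiv.swap (0 : Fin 4) 3 1 = 1 := by decide
  have h2 : Equiv.swap (0 : Fin 4) 3 2 = 2 := by decide
  simp only [P03, Equiv.Perm.mul_apply, h1, h2]

lemma hP12 : ∀ σ : Equiv.Perm (Fin 4), P12 (σ * Equiv.swap 1 2) = P12 σ := by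
  intro σ
  have h0 : Equiv.swap (1 : Fin 4) 2 0 = 0 := by decide
  have h1 : Equiv.swap (1 : Fin 4) 2 1 = 2 := by decide
  have h2 : Equiv.swap (1 : Fin 4) 2 2 = 1 := by decide
  simp only [P12, Equiv.Perm.mul_apply, h0, h1, h2]
  rw [add_comm (Finsupp.single (σ 1) (1 : ℕ)) (Finsupp.single (σ 2) (1 : ℕ))]

lemma hP13 : ∀ σ : Equiv.Perm (Fin 4), P13 (σ * Equiv.swap 1 3) = P13 σ := by
  intro σ
  have h0 : Equiv.swap (1 : Fin 4) 3 0 = 0 := by decide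
  have h2 : Equiv.swap (1 : Fin 4) 3 2 = 2 := by decide
  simp only [P13, Equiv.Perm.mul_apply, h0, h2]

/-- The chain `A₂` in the Świątkowski complex of the theta
graph `Θ₄` satisfies `∂A₂ = 0`. -/
theorem dA2_eq_zero : D ends A2 = 0 := by
  rw [A2, map_sum, Finset.sum_congr rfl fun σ _ => D_A2_step σ, ← Finset.smul_sum]
  have hsum : ∑ σ : Equiv.Perm (Fin 4), ((Equiv.Perm.sign σ : ℤˣ) : ℤ) • Bfun σ = 0 := by
    have hstep : ∀ σ : Equiv.Perm (Fin 4),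
        ((Equiv.Perm.sign σ : ℤˣ) : ℤ) • Bfun σ =
          ((Equiv.Perm.sign σ : ℤˣ) : ℤ) • P1 σ + ((Equiv.Perm.sign σ : ℤˣ) : ℤ) • P02 σ
            + ((Equiv.Perm.sign σ : ℤˣ) : ℤ) • P03 σ + ((Equiv.Perm.sign σ : ℤˣ) : ℤ) • P12 σ
            + ((Equiv.Perm.sign σ : ℤˣ) : ℤ) • P13 σ := by
      intro σ
      rw [Bfun_decomp]
      module
    rw [Finset.sum_congr rfl fun σ _ => hstep σ, Finset.sum_add_distrib,
      Finset.sum_add_distrib, Finset.sum_add_distrib, Finset.sum_add_distrib,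
      sum_sign_smul_eq_zero P1 2 3 (by decide) hP1,
      sum_sign_smul_eq_zero P02 0 2 (by decide) hP02,
      sum_sign_smul_eq_zero P03 0 3 (by decide) hP03,
      sum_sign_smul_eq_zero P12 1 2 (by decide) hP12,
      sum_sign_smul_eq_zero P13 1 3 (by decide) hP13]
    simp
  rw [hsum, smul_zero]

end Theta4
end

section
/- The second homology group H₂(B₃(Θ₄)) of the unordered 3-point configuration space of the theta graph with four edges is free abelian of rank 1. -/
namespace Theta4

open Swiatkowski

noncomputable abbrev m1 (e : Fin 4) : Fin 4 →₀ ℕ := Finsupp.single e 1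
noncomputable abbrev m2 (e a : Fin 4) : Fin 4 →₀ ℕ := Finsupp.single e 1 + Finsupp.single a 1

def hA (a : Fin 4) : {h : Fin 4 × Bool // vtx ends h = false} := ⟨(a, false), rfl⟩
def hB (b : Fin 4) : {h : Fin 4 × Bool // vtx ends h = true} := ⟨(b, true), rfl⟩

def st (g0 : VGen ends false) (g1 : VGen ends true) : States ends := fun v =>
  match v with
  | false => g0
  | true => g1

@[simp] lemma st_false (g0 : VGen ends false) (g1 : VGen ends true) : st g0 g1 false = g0 := rfl
@[simp] lemma st_true (g0 : VGen ends false) (g1 : VGen ends true) : st g0 g1 true = g1 := rfl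

lemma st_surj (f : States ends) : f = st (f false) (f true) := by
  funext v; cases v <;> rfl

@[simp] lemma st_inj {g0 g0' : VGen ends false} {g1 g1' : VGen ends true} :
    st g0 g1 = st g0' g1' ↔ g0 = g0' ∧ g1 = g1' := by
  constructor
  · intro h; exact ⟨congrFun h false, congrFun h true⟩
  · rintro ⟨rfl, rfl⟩; rfl

@[simp] lemma update_false_s3 (g0 g0' : VGen ends false) (g1 : VGen ends true) :
    Function.update (st g0 g1) false g0' = st g0' g1 := by
  funext v; cases v <;> simp [Function.update]

@[simp] lemma update_true_s3 (g0 : VGen ends false) (g1 g1' : VGen ends true) :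
    Function.update (st g0 g1) true g1' = st g0 g1' := by
  funext v; cases v <;> simp [Function.update]

@[simp] lemma hA_inj {a a' : Fin 4} : hA a = hA a' ↔ a = a' := by
  constructor
  · intro h; exact congrArg (fun z => z.1.1) h
  · rintro rfl; rfl

@[simp] lemma hB_inj {b b' : Fin 4} : hB b = hB b' ↔ b = b' := by
  constructor
  · intro h; exact congrArg (fun z => z.1.1) h
  · rintro rfl; rfl

@[simp] lemma m1_inj {e e' : Fin 4} : m1 e = m1 e' ↔ e = e' := by
  constructor
  · intro h
    have := Finsupp.single_left_injective (α := Fin 4) (b := (1:ℕ)) one_ne_zero h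
    exact this
  · rintro rfl; rfl

lemma m1_sum (e : Fin 4) : (m1 e).sum (fun _ n => n) = 1 := by
  simp [m1, Finsupp.sum_single_index]

lemma m2_sum (e a : Fin 4) : (m2 e a).sum (fun _ n => n) = 2 := by
  classical
  rw [Finsupp.sum_add_index (by simp) (by simp)]
  simp [Finsupp.sum_single_index]

@[simp] lemma m1_ne_m2 (e e' a' : Fin 4) : m1 e = m2 e' a' ↔ False := by
  simp only [iff_false]
  intro h
  have h1 := m1_sum e
  have h2 := m2_sum e' a'
  rw [h] at h1
  omega

@[simp] lemma m2_ne_m1 (e a e' : Fin 4) : m2 e a = m1 e' ↔ False := by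
  rw [← m1_ne_m2 e' e a, eq_comm]

lemma m2_eq_iff (e a e' a' : Fin 4) :
    m2 e a = m2 e' a' ↔ (e = e' ∧ a = a') ∨ (e = a' ∧ a = e') := by
  constructor
  · intro h
    by_cases he : e = e'
    · subst he
      left
      refine ⟨rfl, ?_⟩
      have := add_left_cancel h
      exact m1_inj.mp this
    · right
      have happ := congrArg (fun m : Fin 4 →₀ ℕ => m e) h
      simp [Finsupp.single_apply] at happ
      have hea' : e = a' := by
        by_cases h1 : a = e <;> by_cases h2 : e' = e <;> by_cases h3 : a' = e <;>
          simp [h1, h2, h3] at happ <;> first | (exact h3.symm) | omega | (exact absurd h2.symm he)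
      subst hea'
      refine ⟨rfl, ?_⟩
      simp only [m2] at h
      rw [add_comm (Finsupp.single e 1) (Finsupp.single a 1)] at h
      have := add_right_cancel h
      exact m1_inj.mp this
  · rintro (⟨rfl, rfl⟩ | ⟨rfl, rfl⟩)
    · rfl
    · exact add_comm _ _


noncomputable def bas (e a b : Fin 4) : Bas ends :=
  (m1 e, st (Sum.inl (hA a)) (Sum.inl (hB b)))

lemma bas_inj {e a b e' a' b' : Fin 4} (h : bas e a b = bas e' a' b') :
    e = e' ∧ a = a' ∧ b = b' := by
  rw [bas, bas, Prod.mk.injEq, st_inj] at h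
  obtain ⟨h1, h2, h3⟩ := h
  exact ⟨m1_inj.mp h1, hA_inj.mp (Sum.inl.inj h2), hB_inj.mp (Sum.inl.inj h3)⟩

@[simp] lemma bas_eq_iff {e a b e' a' b' : Fin 4} :
    bas e a b = bas e' a' b' ↔ e = e' ∧ a = a' ∧ b = b' := by
  constructor
  · exact bas_inj
  · rintro ⟨rfl, rfl, rfl⟩; rfl

/-- the concrete coefficients of the generating cycle -/
def w (e a b : Fin 4) : ℤ :=
  Int.sign (((a:ℤ) - e) * ((b:ℤ) - e) * ((b:ℤ) - a)) * (-1) ^ ((e:ℕ) + a + b + 1)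

lemma w_swap12 : ∀ e a b : Fin 4, w a e b = -w e a b := by decide
lemma w_swap13 : ∀ e a b : Fin 4, w b a e = -w e a b := by decide
lemma w_sumA : ∀ e b : Fin 4, w e 0 b + w e 1 b + w e 2 b + w e 3 b = 0 := by decide
lemma w_sumB : ∀ e a : Fin 4, w e a 0 + w e a 1 + w e a 2 + w e a 3 = 0 := by decide
lemma w_012 : w 0 1 2 = 1 := by decide

/-- signs -/
noncomputable def s0 : ℤ := sgn ends (st (Sum.inl (hA 0)) (Sum.inl (hB 0))) false
noncomputable def s1 : ℤ := sgn ends (st (Sum.inl (hA 0)) (Sum.inl (hB 0))) true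

@[simp] lemma sgn_st_false (a b : Fin 4) :
    sgn ends (st (Sum.inl (hA a)) (Sum.inl (hB b))) false = s0 := by
  unfold s0 sgn
  rfl

@[simp] lemma sgn_st_true (a b : Fin 4) :
    sgn ends (st (Sum.inl (hA a)) (Sum.inl (hB b))) true = s1 := by
  unfold s1 sgn
  rfl

lemma s0_ne : s0 ≠ 0 := by
  unfold s0 sgn
  exact pow_ne_zero _ (by norm_num)

lemma s1_ne : s1 ≠ 0 := by
  unfold s1 sgn
  exact pow_ne_zero _ (by norm_num)

noncomputable def stA (b : Fin 4) : States ends := st (Sum.inr false) (Sum.inl (hB b))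
noncomputable def stB (b : Fin 4) : States ends := st (Sum.inr true) (Sum.inl (hB b))
noncomputable def stC (a : Fin 4) : States ends := st (Sum.inl (hA a)) (Sum.inr false)
noncomputable def stD (a : Fin 4) : States ends := st (Sum.inl (hA a)) (Sum.inr true)

lemma Db_bas (e a b : Fin 4) :
    Db ends (bas e a b) =
      s1 • (Finsupp.single (m2 e b, stC a) 1 - Finsupp.single (m1 e, stD a) 1)
      + s0 • (Finsupp.single (m2 e a, stA b) 1 - Finsupp.single (m1 e, stB b) 1) := by
  unfold Db
  rw [Fintype.sum_bool]
  simp only [bas, st_true, st_false, update_true_s3, update_false_s3, sgn_st_false, sgn_st_true, hA, hB]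
  rfl



/-- shorthand: the four shapes of degree-1 targets -/
noncomputable def SA (c : Fin 4 × Fin 4 × Fin 4 → ℤ) : SC ends :=
  ∑ p : Fin 4 × Fin 4 × Fin 4, c p • Finsupp.single ((m2 p.1 p.2.1, stA p.2.2) : Bas ends) (1:ℤ)
noncomputable def SBz (c : Fin 4 × Fin 4 × Fin 4 → ℤ) : SC ends :=
  ∑ p : Fin 4 × Fin 4 × Fin 4, c p • Finsupp.single ((m1 p.1, stB p.2.2) : Bas ends) (1:ℤ)
noncomputable def SCz (c : Fin 4 × Fin 4 × Fin 4 → ℤ) : SC ends :=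
  ∑ p : Fin 4 × Fin 4 × Fin 4, c p • Finsupp.single ((m2 p.1 p.2.2, stC p.2.1) : Bas ends) (1:ℤ)
noncomputable def SDz (c : Fin 4 × Fin 4 × Fin 4 → ℤ) : SC ends :=
  ∑ p : Fin 4 × Fin 4 × Fin 4, c p • Finsupp.single ((m1 p.1, stD p.2.1) : Bas ends) (1:ℤ)

lemma Dx_eq (c : Fin 4 × Fin 4 × Fin 4 → ℤ) :
    D ends (∑ p : Fin 4 × Fin 4 × Fin 4, c p • Finsupp.single (bas p.1 p.2.1 p.2.2) (1:ℤ)) =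
      s1 • SCz c - s1 • SDz c + (s0 • SA c - s0 • SBz c) := by
  rw [map_sum]
  have hD1 : ∀ p : Fin 4 × Fin 4 × Fin 4,
      D ends (c p • Finsupp.single (bas p.1 p.2.1 p.2.2) (1:ℤ)) =
        c p • Db ends (bas p.1 p.2.1 p.2.2) := by
    intro p
    rw [map_smul, D, Finsupp.linearCombination_single, one_smul]
  simp only [hD1, Db_bas]
  have comm : ∀ (n s : ℤ) (v : SC ends), n • s • v = s • n • v := fun n s v => smul_comm n s v
  simp only [smul_add, smul_sub, comm]
  rw [Finset.sum_add_distrib, Finset.sum_sub_distrib, Finset.sum_sub_distrib,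
    ← Finset.smul_sum, ← Finset.smul_sum, ← Finset.smul_sum, ← Finset.smul_sum]
  rw [SA, SBz, SCz, SDz]


lemma neg_self_eq_zero {α : Type*} {x : α →₀ ℤ} (h : x = -x) : x = 0 := by
  ext t
  have h1 : x t = - x t := by
    conv_lhs => rw [h]
    simp
  simp only [Finsupp.coe_zero, Pi.zero_apply]
  omega

/-- the coefficient function of the generating cycle, on triples -/
def wp (p : Fin 4 × Fin 4 × Fin 4) : ℤ := w p.1 p.2.1 p.2.2

def sw12 : Fin 4 × Fin 4 × Fin 4 ≃ Fin 4 × Fin 4 × Fin 4 where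
  toFun p := (p.2.1, p.1, p.2.2)
  invFun p := (p.2.1, p.1, p.2.2)
  left_inv p := rfl
  right_inv p := rfl

def sw13 : Fin 4 × Fin 4 × Fin 4 ≃ Fin 4 × Fin 4 × Fin 4 where
  toFun p := (p.2.2, p.2.1, p.1)
  invFun p := (p.2.2, p.2.1, p.1)
  left_inv p := rfl
  right_inv p := rfl

lemma SA_w : SA wp = 0 := by
  apply neg_self_eq_zero
  have key := Fintype.sum_equiv sw12
    (fun p : Fin 4 × Fin 4 × Fin 4 => wp p • Finsupp.single ((m2 p.1 p.2.1, stA p.2.2) : Bas ends) (1:ℤ))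
    (fun p : Fin 4 × Fin 4 × Fin 4 => (-(wp p)) • Finsupp.single ((m2 p.1 p.2.1, stA p.2.2) : Bas ends) (1:ℤ))
    ?_
  · show SA wp = - SA wp
    unfold SA
    conv_lhs => rw [key]
    rw [← Finset.sum_neg_distrib]
    congr 1
    funext p
    rw [neg_smul]
  · intro p
    obtain ⟨e, a, b⟩ := p
    show w e a b • Finsupp.single ((m2 e a, stA b) : Bas ends) (1:ℤ)
        = (-(w a e b)) • Finsupp.single ((m2 a e, stA b) : Bas ends) (1:ℤ)
    rw [show m2 a e = m2 e a from add_comm _ _, w_swap12 e a b, neg_neg]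

lemma SC_w : SCz wp = 0 := by
  apply neg_self_eq_zero
  have key := Fintype.sum_equiv sw13
    (fun p : Fin 4 × Fin 4 × Fin 4 => wp p • Finsupp.single ((m2 p.1 p.2.2, stC p.2.1) : Bas ends) (1:ℤ))
    (fun p : Fin 4 × Fin 4 × Fin 4 => (-(wp p)) • Finsupp.single ((m2 p.1 p.2.2, stC p.2.1) : Bas ends) (1:ℤ))
    ?_
  · show SCz wp = - SCz wp
    unfold SCz
    conv_lhs => rw [key]
    rw [← Finset.sum_neg_distrib]
    congr 1
    funext p
    rw [neg_smul]
  · intro p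
    obtain ⟨e, a, b⟩ := p
    show w e a b • Finsupp.single ((m2 e b, stC a) : Bas ends) (1:ℤ)
        = (-(w b a e)) • Finsupp.single ((m2 b e, stC a) : Bas ends) (1:ℤ)
    rw [show m2 b e = m2 e b from add_comm _ _, w_swap13 e a b, neg_neg]

lemma SB_w : SBz wp = 0 := by
  rw [SBz, Fintype.sum_prod_type]
  have : ∀ e : Fin 4, ∑ q : Fin 4 × Fin 4,
      wp (e, q) • Finsupp.single ((m1 e, stB q.2) : Bas ends) (1:ℤ) = 0 := by
    intro e
    rw [Fintype.sum_prod_type, Finset.sum_comm]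
    have inner : ∀ b : Fin 4, ∑ a : Fin 4,
        wp (e, a, b) • Finsupp.single ((m1 e, stB b) : Bas ends) (1:ℤ) = 0 := by
      intro b
      rw [← Finset.sum_smul]
      have hz : ∑ a : Fin 4, wp (e, a, b) = 0 := by
        rw [Fin.sum_univ_four]
        exact w_sumA e b
      rw [hz, zero_smul]
    simp only [inner, Finset.sum_const_zero]
  simp only [this, Finset.sum_const_zero]

lemma SD_w : SDz wp = 0 := by
  rw [SDz, Fintype.sum_prod_type]
  have : ∀ e : Fin 4, ∑ q : Fin 4 × Fin 4,
      wp (e, q) • Finsupp.single ((m1 e, stD q.1) : Bas ends) (1:ℤ) = 0 := by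
    intro e
    rw [Fintype.sum_prod_type]
    have inner : ∀ a : Fin 4, ∑ b : Fin 4,
        wp (e, a, b) • Finsupp.single ((m1 e, stD a) : Bas ends) (1:ℤ) = 0 := by
      intro a
      rw [← Finset.sum_smul]
      have hz : ∑ b : Fin 4, wp (e, a, b) = 0 := by
        rw [Fin.sum_univ_four]
        exact w_sumB e a
      rw [hz, zero_smul]
    simp only [inner, Finset.sum_const_zero]
  simp only [this, Finset.sum_const_zero]

/-- the generating cycle -/
noncomputable def zgen : SC ends :=
  ∑ p : Fin 4 × Fin 4 × Fin 4, wp p • Finsupp.single (bas p.1 p.2.1 p.2.2) (1:ℤ)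

lemma D_zgen : D ends zgen = 0 := by
  rw [zgen, Dx_eq, SA_w, SB_w, SC_w, SD_w]
  simp


lemma monomial_of_sum_one (m : Fin 4 →₀ ℕ) (h : m.sum (fun _ n => n) = 1) :
    ∃ e, m = m1 e := by
  rw [Finsupp.sum_fintype _ _ (fun _ => rfl), Fin.sum_univ_four] at h
  have hcase : (m 0 = 1 ∧ m 1 = 0 ∧ m 2 = 0 ∧ m 3 = 0) ∨
      (m 0 = 0 ∧ m 1 = 1 ∧ m 2 = 0 ∧ m 3 = 0) ∨
      (m 0 = 0 ∧ m 1 = 0 ∧ m 2 = 1 ∧ m 3 = 0) ∨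
      (m 0 = 0 ∧ m 1 = 0 ∧ m 2 = 0 ∧ m 3 = 1) := by omega
  rcases hcase with ⟨h0, h1, h2, h3⟩ | ⟨h0, h1, h2, h3⟩ | ⟨h0, h1, h2, h3⟩ | ⟨h0, h1, h2, h3⟩
  · exact ⟨0, by ext i; fin_cases i <;> simp [Finsupp.single_apply, h0, h1, h2, h3]⟩
  · exact ⟨1, by ext i; fin_cases i <;> simp [Finsupp.single_apply, h0, h1, h2, h3]⟩
  · exact ⟨2, by ext i; fin_cases i <;> simp [Finsupp.single_apply, h0, h1, h2, h3]⟩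
  · exact ⟨3, by ext i; fin_cases i <;> simp [Finsupp.single_apply, h0, h1, h2, h3]⟩

lemma shape_of_dw (t : Bas ends) (h2 : degB ends t = 2) (h3 : wtB ends t = 3) :
    ∃ e a b, t = bas e a b := by
  obtain ⟨mt, ft⟩ := t
  have hall : ∀ v, (ft v).isLeft = true := by
    intro v
    have huniv : (Finset.univ.filter fun v => (ft v).isLeft = true) = Finset.univ := by
      apply Finset.eq_univ_of_card
      rw [show Fintype.card Bool = 2 from rfl]
      exact h2
    have : v ∈ Finset.univ.filter fun v => (ft v).isLeft = true := by
      rw [huniv]; exact Finset.mem_univ v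
    exact (Finset.mem_filter.mp this).2
  obtain ⟨a, hfa⟩ : ∃ a, ft false = Sum.inl (hA a) := by
    rcases hf : ft false with h0 | tb
    · obtain ⟨⟨a, bb⟩, hv⟩ := h0
      cases bb
      · exact ⟨a, rfl⟩
      · simp [vtx, ends] at hv
    · have := hall false
      rw [hf] at this
      simp at this
  obtain ⟨b, hfb⟩ : ∃ b, ft true = Sum.inl (hB b) := by
    rcases hf : ft true with h0 | tb
    · obtain ⟨⟨b, bb⟩, hv⟩ := h0
      cases bb
      · simp [vtx, ends] at hv
      · exact ⟨b, rfl⟩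
    · have := hall true
      rw [hf] at this
      simp at this
  have hsum : mt.sum (fun _ n => n) = 1 := by
    rw [wtB] at h3
    simp only [Fintype.sum_bool] at h3
    rw [hfa, hfb] at h3
    simp at h3
    omega
  obtain ⟨e, he⟩ := monomial_of_sum_one mt hsum
  refine ⟨e, a, b, ?_⟩
  rw [bas, ← he]
  refine Prod.ext rfl ?_
  show ft = _
  rw [st_surj ft, hfa, hfb]


lemma degB_bas (e a b : Fin 4) : degB ends (bas e a b) = 2 := rfl

lemma wtB_bas (e a b : Fin 4) : wtB ends (bas e a b) = 3 := by
  rw [wtB]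
  simp only [Fintype.sum_bool]
  rw [show ((bas e a b).1.sum fun _ n => n) = 1 from m1_sum e]
  rfl

lemma decomp (x : SC ends) (hx : x ∈ hasDW ends 2 3) :
    x = ∑ p : Fin 4 × Fin 4 × Fin 4,
      x (bas p.1 p.2.1 p.2.2) • Finsupp.single (bas p.1 p.2.1 p.2.2) (1:ℤ) := by
  ext t
  rw [Finset.sum_apply']
  simp only [Finsupp.smul_apply, Finsupp.single_apply, smul_eq_mul]
  by_cases hyp : ∃ p : Fin 4 × Fin 4 × Fin 4, bas p.1 p.2.1 p.2.2 = t
  · obtain ⟨q, rfl⟩ := hyp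
    rw [Finset.sum_eq_single q]
    · simp
    · intro p _ hpq
      rw [if_neg, mul_zero]
      intro hcontra
      obtain ⟨he, ha, hb⟩ := bas_inj hcontra
      exact hpq (by
        obtain ⟨p1, p2, p3⟩ := p
        obtain ⟨q1, q2, q3⟩ := q
        simp only at he ha hb
        rw [he, ha, hb])
    · intro hq
      exact absurd (Finset.mem_univ q) hq
  · have hxt : x t = 0 := by
      by_contra hne
      have ht : t ∈ x.support := Finsupp.mem_support_iff.mpr hne
      obtain ⟨hd, hw⟩ := hx t ht
      obtain ⟨e, a, b, rfl⟩ := shape_of_dw t hd hw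
      exact hyp ⟨(e, a, b), rfl⟩
    rw [hxt]
    symm
    apply Finset.sum_eq_zero
    intro p _
    rw [if_neg (fun hc => hyp ⟨p, hc⟩), mul_zero]

set_option maxRecDepth 10000 in
lemma zgen_mem : zgen ∈ cyc ends 2 3 := by
  constructor
  · exact LinearMap.mem_ker.mpr D_zgen
  · intro t ht
    unfold zgen at ht
    obtain ⟨p, _, hp⟩ := Finsupp.mem_support_finset_sum t ht
    have hsub := Finsupp.support_smul (b := wp p)
      (g := Finsupp.single (bas p.1 p.2.1 p.2.2) (1:ℤ)) hp
    rw [Finsupp.support_single_ne_zero _ one_ne_zero] at hsub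
    rw [Finset.mem_singleton] at hsub
    subst hsub
    exact ⟨degB_bas _ _ _, wtB_bas _ _ _⟩


@[simp] lemma stA_inj {x y : Fin 4} : stA x = stA y ↔ x = y := by
  rw [stA, stA, st_inj]
  simp

@[simp] lemma stB_inj {x y : Fin 4} : stB x = stB y ↔ x = y := by
  rw [stB, stB, st_inj]
  simp

@[simp] lemma stC_inj {x y : Fin 4} : stC x = stC y ↔ x = y := by
  rw [stC, stC, st_inj]
  simp

@[simp] lemma stD_inj {x y : Fin 4} : stD x = stD y ↔ x = y := by
  rw [stD, stD, st_inj]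
  simp

@[simp] lemma stA_ne_stB {x y : Fin 4} : stA x = stB y ↔ False := by
  rw [stA, stB, st_inj]
  simp

@[simp] lemma stA_ne_stC {x y : Fin 4} : stA x = stC y ↔ False := by
  rw [stA, stC, st_inj]
  simp

@[simp] lemma stA_ne_stD {x y : Fin 4} : stA x = stD y ↔ False := by
  rw [stA, stD, st_inj]
  simp

@[simp] lemma stB_ne_stA {x y : Fin 4} : stB x = stA y ↔ False := by
  rw [stB, stA, st_inj]
  simp

@[simp] lemma stB_ne_stC {x y : Fin 4} : stB x = stC y ↔ False := by
  rw [stB, stC, st_inj]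
  simp

@[simp] lemma stB_ne_stD {x y : Fin 4} : stB x = stD y ↔ False := by
  rw [stB, stD, st_inj]
  simp

@[simp] lemma stC_ne_stA {x y : Fin 4} : stC x = stA y ↔ False := by
  rw [stC, stA, st_inj]
  simp

@[simp] lemma stC_ne_stB {x y : Fin 4} : stC x = stB y ↔ False := by
  rw [stC, stB, st_inj]
  simp

@[simp] lemma stC_ne_stD {x y : Fin 4} : stC x = stD y ↔ False := by
  rw [stC, stD, st_inj]
  simp

@[simp] lemma stD_ne_stA {x y : Fin 4} : stD x = stA y ↔ False := by
  rw [stD, stA, st_inj]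
  simp

@[simp] lemma stD_ne_stB {x y : Fin 4} : stD x = stB y ↔ False := by
  rw [stD, stB, st_inj]
  simp

@[simp] lemma stD_ne_stC {x y : Fin 4} : stD x = stC y ↔ False := by
  rw [stD, stC, st_inj]
  simp

abbrev T3 := Fin 4 × Fin 4 × Fin 4

lemma sum_point (f : T3 → ℤ) (q : T3) :
    (∑ p : T3, f p * if p = q then 1 else 0) = f q := by
  simp only [mul_ite, mul_one, mul_zero]
  rw [Finset.sum_ite_eq' Finset.univ q f, if_pos (Finset.mem_univ _)]

set_option maxHeartbeats 1000000 in
lemma sum_ite_13 (f : T3 → ℤ) (e₀ b₀ : Fin 4) :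
    (∑ p : T3, f p * if p.1 = e₀ ∧ p.2.2 = b₀ then 1 else 0)
      = ∑ a : Fin 4, f (e₀, a, b₀) := by
  rw [Fintype.sum_prod_type]
  have h1 : ∀ e : Fin 4, ∑ q : Fin 4 × Fin 4, f (e, q) * (if e = e₀ ∧ q.2 = b₀ then 1 else 0)
      = if e = e₀ then ∑ a : Fin 4, f (e, a, b₀) else 0 := by
    intro e
    by_cases he : e = e₀
    · subst he
      simp only [true_and]
      rw [if_pos trivial, Fintype.sum_prod_type]
      apply Finset.sum_congr rfl
      intro a _
      rw [Finset.sum_eq_single b₀ (fun b _ hb => by rw [if_neg hb, mul_zero])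
        (fun h => absurd (Finset.mem_univ _) h), if_pos rfl, mul_one]
    · rw [if_neg he]
      apply Finset.sum_eq_zero
      intro q _
      rw [if_neg (fun hc => he hc.1), mul_zero]
  simp only [h1]
  rw [Finset.sum_ite_eq' Finset.univ e₀ (fun e => ∑ a : Fin 4, f (e, a, b₀))]
  rw [if_pos (Finset.mem_univ _)]

set_option maxHeartbeats 1000000 in
lemma sum_ite_12 (f : T3 → ℤ) (e₀ a₀ : Fin 4) :
    (∑ p : T3, f p * if p.1 = e₀ ∧ p.2.1 = a₀ then 1 else 0)
      = ∑ b : Fin 4, f (e₀, a₀, b) := by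
  rw [Fintype.sum_prod_type]
  have h1 : ∀ e : Fin 4, ∑ q : Fin 4 × Fin 4, f (e, q) * (if e = e₀ ∧ q.1 = a₀ then 1 else 0)
      = if e = e₀ then ∑ b : Fin 4, f (e, a₀, b) else 0 := by
    intro e
    by_cases he : e = e₀
    · subst he
      simp only [true_and]
      rw [if_pos trivial, Fintype.sum_prod_type]
      rw [Finset.sum_eq_single a₀ (fun a _ ha => by
          apply Finset.sum_eq_zero
          intro b _
          rw [if_neg ha, mul_zero])
        (fun h => absurd (Finset.mem_univ _) h)]
      apply Finset.sum_congr rfl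
      intro b _
      rw [if_pos rfl, mul_one]
    · rw [if_neg he]
      apply Finset.sum_eq_zero
      intro q _
      rw [if_neg (fun hc => he hc.1), mul_zero]
  simp only [h1]
  rw [Finset.sum_ite_eq' Finset.univ e₀ (fun e => ∑ b : Fin 4, f (e, a₀, b))]
  rw [if_pos (Finset.mem_univ _)]

lemma sum_pair12 (f : T3 → ℤ) (e₀ a₀ b₀ : Fin 4) (hne : e₀ ≠ a₀) :
    (∑ p : T3, f p *
        if ((p.1 = e₀ ∧ p.2.1 = a₀) ∨ (p.1 = a₀ ∧ p.2.1 = e₀)) ∧ p.2.2 = b₀ then 1 else 0)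
      = f (e₀, a₀, b₀) + f (a₀, e₀, b₀) := by
  have split : ∀ p : T3, (f p *
      if ((p.1 = e₀ ∧ p.2.1 = a₀) ∨ (p.1 = a₀ ∧ p.2.1 = e₀)) ∧ p.2.2 = b₀ then 1 else 0)
      = f p * (if p = (e₀, a₀, b₀) then 1 else 0) + f p * (if p = (a₀, e₀, b₀) then 1 else 0) := by
    intro ⟨x, y, z⟩
    simp only [Prod.mk.injEq]
    by_cases hx1 : x = e₀ <;> by_cases hy1 : y = a₀ <;> by_cases hx2 : x = a₀ <;>
      by_cases hy2 : y = e₀ <;> by_cases hz : z = b₀ <;> simp_all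
  simp only [split]
  rw [Finset.sum_add_distrib, sum_point, sum_point]

lemma sum_diag12 (f : T3 → ℤ) (e₀ b₀ : Fin 4) :
    (∑ p : T3, f p *
        if ((p.1 = e₀ ∧ p.2.1 = e₀) ∨ (p.1 = e₀ ∧ p.2.1 = e₀)) ∧ p.2.2 = b₀ then 1 else 0)
      = f (e₀, e₀, b₀) := by
  have split : ∀ p : T3, (f p *
      if ((p.1 = e₀ ∧ p.2.1 = e₀) ∨ (p.1 = e₀ ∧ p.2.1 = e₀)) ∧ p.2.2 = b₀ then 1 else 0)
      = f p * (if p = (e₀, e₀, b₀) then 1 else 0) := by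
    intro ⟨x, y, z⟩
    simp only [Prod.mk.injEq, or_self, and_assoc]
  simp only [split, sum_point]

lemma sum_pair13 (f : T3 → ℤ) (e₀ a₀ b₀ : Fin 4) (hne : e₀ ≠ b₀) :
    (∑ p : T3, f p *
        if ((p.1 = e₀ ∧ p.2.2 = b₀) ∨ (p.1 = b₀ ∧ p.2.2 = e₀)) ∧ p.2.1 = a₀ then 1 else 0)
      = f (e₀, a₀, b₀) + f (b₀, a₀, e₀) := by
  have split : ∀ p : T3, (f p *
      if ((p.1 = e₀ ∧ p.2.2 = b₀) ∨ (p.1 = b₀ ∧ p.2.2 = e₀)) ∧ p.2.1 = a₀ then 1 else 0)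
      = f p * (if p = (e₀, a₀, b₀) then 1 else 0) + f p * (if p = (b₀, a₀, e₀) then 1 else 0) := by
    intro ⟨x, y, z⟩
    simp only [Prod.mk.injEq]
    by_cases hx1 : x = e₀ <;> by_cases hz1 : z = b₀ <;> by_cases hx2 : x = b₀ <;>
      by_cases hz2 : z = e₀ <;> by_cases hy : y = a₀ <;> simp_all
  simp only [split]
  rw [Finset.sum_add_distrib, sum_point, sum_point]

lemma sum_diag13 (f : T3 → ℤ) (e₀ a₀ : Fin 4) :
    (∑ p : T3, f p *
        if ((p.1 = e₀ ∧ p.2.2 = e₀) ∨ (p.1 = e₀ ∧ p.2.2 = e₀)) ∧ p.2.1 = a₀ then 1 else 0)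
      = f (e₀, a₀, e₀) := by
  have split : ∀ p : T3, (f p *
      if ((p.1 = e₀ ∧ p.2.2 = e₀) ∨ (p.1 = e₀ ∧ p.2.2 = e₀)) ∧ p.2.1 = a₀ then 1 else 0)
      = f p * (if p = (e₀, a₀, e₀) then 1 else 0) := by
    intro ⟨x, y, z⟩
    simp only [Prod.mk.injEq, or_self]
    congr 1
    apply if_congr ?_ rfl rfl
    constructor
    · rintro ⟨⟨h1, h2⟩, h3⟩; exact ⟨h1, h3, h2⟩
    · rintro ⟨h1, h2, h3⟩; exact ⟨⟨h1, h3⟩, h2⟩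
  simp only [split, sum_point]


lemma eval_SBz_A (c : T3 → ℤ) (e₀ a₀ b₀ : Fin 4) :
    (SBz c) (((m2 e₀ a₀, stA b₀)) : Bas ends) = 0 := by
  unfold SBz
  rw [Finset.sum_apply']
  apply Finset.sum_eq_zero
  intro p _
  rw [Finsupp.smul_apply, Finsupp.single_apply, smul_eq_mul]
  rw [if_neg, mul_zero]
  intro hc
  rw [Prod.mk.injEq] at hc
  exact (stB_ne_stA).mp hc.2

lemma eval_SCz_A (c : T3 → ℤ) (e₀ a₀ b₀ : Fin 4) :
    (SCz c) (((m2 e₀ a₀, stA b₀)) : Bas ends) = 0 := by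
  unfold SCz
  rw [Finset.sum_apply']
  apply Finset.sum_eq_zero
  intro p _
  rw [Finsupp.smul_apply, Finsupp.single_apply, smul_eq_mul]
  rw [if_neg, mul_zero]
  intro hc
  rw [Prod.mk.injEq] at hc
  exact (stC_ne_stA).mp hc.2

lemma eval_SDz_A (c : T3 → ℤ) (e₀ a₀ b₀ : Fin 4) :
    (SDz c) (((m2 e₀ a₀, stA b₀)) : Bas ends) = 0 := by
  unfold SDz
  rw [Finset.sum_apply']
  apply Finset.sum_eq_zero
  intro p _
  rw [Finsupp.smul_apply, Finsupp.single_apply, smul_eq_mul]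
  rw [if_neg, mul_zero]
  intro hc
  rw [Prod.mk.injEq] at hc
  exact (stD_ne_stA).mp hc.2

lemma eval_SA_B (c : T3 → ℤ) (e₀ b₀ : Fin 4) :
    (SA c) (((m1 e₀, stB b₀)) : Bas ends) = 0 := by
  unfold SA
  rw [Finset.sum_apply']
  apply Finset.sum_eq_zero
  intro p _
  rw [Finsupp.smul_apply, Finsupp.single_apply, smul_eq_mul]
  rw [if_neg, mul_zero]
  intro hc
  rw [Prod.mk.injEq] at hc
  exact (stA_ne_stB).mp hc.2

lemma eval_SCz_B (c : T3 → ℤ) (e₀ b₀ : Fin 4) :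
    (SCz c) (((m1 e₀, stB b₀)) : Bas ends) = 0 := by
  unfold SCz
  rw [Finset.sum_apply']
  apply Finset.sum_eq_zero
  intro p _
  rw [Finsupp.smul_apply, Finsupp.single_apply, smul_eq_mul]
  rw [if_neg, mul_zero]
  intro hc
  rw [Prod.mk.injEq] at hc
  exact (stC_ne_stB).mp hc.2

lemma eval_SDz_B (c : T3 → ℤ) (e₀ b₀ : Fin 4) :
    (SDz c) (((m1 e₀, stB b₀)) : Bas ends) = 0 := by
  unfold SDz
  rw [Finset.sum_apply']
  apply Finset.sum_eq_zero
  intro p _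
  rw [Finsupp.smul_apply, Finsupp.single_apply, smul_eq_mul]
  rw [if_neg, mul_zero]
  intro hc
  rw [Prod.mk.injEq] at hc
  exact (stD_ne_stB).mp hc.2

lemma eval_SA_C (c : T3 → ℤ) (e₀ a₀ b₀ : Fin 4) :
    (SA c) (((m2 e₀ b₀, stC a₀)) : Bas ends) = 0 := by
  unfold SA
  rw [Finset.sum_apply']
  apply Finset.sum_eq_zero
  intro p _
  rw [Finsupp.smul_apply, Finsupp.single_apply, smul_eq_mul]
  rw [if_neg, mul_zero]
  intro hc
  rw [Prod.mk.injEq] at hc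
  exact (stA_ne_stC).mp hc.2

lemma eval_SBz_C (c : T3 → ℤ) (e₀ a₀ b₀ : Fin 4) :
    (SBz c) (((m2 e₀ b₀, stC a₀)) : Bas ends) = 0 := by
  unfold SBz
  rw [Finset.sum_apply']
  apply Finset.sum_eq_zero
  intro p _
  rw [Finsupp.smul_apply, Finsupp.single_apply, smul_eq_mul]
  rw [if_neg, mul_zero]
  intro hc
  rw [Prod.mk.injEq] at hc
  exact (stB_ne_stC).mp hc.2

lemma eval_SDz_C (c : T3 → ℤ) (e₀ a₀ b₀ : Fin 4) :
    (SDz c) (((m2 e₀ b₀, stC a₀)) : Bas ends) = 0 := by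
  unfold SDz
  rw [Finset.sum_apply']
  apply Finset.sum_eq_zero
  intro p _
  rw [Finsupp.smul_apply, Finsupp.single_apply, smul_eq_mul]
  rw [if_neg, mul_zero]
  intro hc
  rw [Prod.mk.injEq] at hc
  exact (stD_ne_stC).mp hc.2

lemma eval_SA_D (c : T3 → ℤ) (e₀ a₀ : Fin 4) :
    (SA c) (((m1 e₀, stD a₀)) : Bas ends) = 0 := by
  unfold SA
  rw [Finset.sum_apply']
  apply Finset.sum_eq_zero
  intro p _
  rw [Finsupp.smul_apply, Finsupp.single_apply, smul_eq_mul]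
  rw [if_neg, mul_zero]
  intro hc
  rw [Prod.mk.injEq] at hc
  exact (stA_ne_stD).mp hc.2

lemma eval_SBz_D (c : T3 → ℤ) (e₀ a₀ : Fin 4) :
    (SBz c) (((m1 e₀, stD a₀)) : Bas ends) = 0 := by
  unfold SBz
  rw [Finset.sum_apply']
  apply Finset.sum_eq_zero
  intro p _
  rw [Finsupp.smul_apply, Finsupp.single_apply, smul_eq_mul]
  rw [if_neg, mul_zero]
  intro hc
  rw [Prod.mk.injEq] at hc
  exact (stB_ne_stD).mp hc.2

lemma eval_SCz_D (c : T3 → ℤ) (e₀ a₀ : Fin 4) :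
    (SCz c) (((m1 e₀, stD a₀)) : Bas ends) = 0 := by
  unfold SCz
  rw [Finset.sum_apply']
  apply Finset.sum_eq_zero
  intro p _
  rw [Finsupp.smul_apply, Finsupp.single_apply, smul_eq_mul]
  rw [if_neg, mul_zero]
  intro hc
  rw [Prod.mk.injEq] at hc
  exact (stC_ne_stD).mp hc.2

lemma eval_SA_A (c : T3 → ℤ) (e₀ a₀ b₀ : Fin 4) (hne : e₀ ≠ a₀) :
    (SA c) ((m2 e₀ a₀, stA b₀) : Bas ends) = c (e₀, a₀, b₀) + c (a₀, e₀, b₀) := by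
  unfold SA
  rw [Finset.sum_apply']
  have key : ∀ p : T3, (c p • Finsupp.single ((m2 p.1 p.2.1, stA p.2.2) : Bas ends) (1:ℤ))
        ((m2 e₀ a₀, stA b₀) : Bas ends)
      = c p * if ((p.1 = e₀ ∧ p.2.1 = a₀) ∨ (p.1 = a₀ ∧ p.2.1 = e₀)) ∧ p.2.2 = b₀ then 1 else 0 := by
    intro p
    rw [Finsupp.smul_apply, Finsupp.single_apply, smul_eq_mul]
    congr 1
    apply if_congr ?_ rfl rfl
    rw [Prod.mk.injEq, m2_eq_iff, stA_inj]
  simp only [key]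
  exact sum_pair12 c e₀ a₀ b₀ hne

lemma eval_SA_Ad (c : T3 → ℤ) (e₀ b₀ : Fin 4) :
    (SA c) ((m2 e₀ e₀, stA b₀) : Bas ends) = c (e₀, e₀, b₀) := by
  unfold SA
  rw [Finset.sum_apply']
  have key : ∀ p : T3, (c p • Finsupp.single ((m2 p.1 p.2.1, stA p.2.2) : Bas ends) (1:ℤ))
        ((m2 e₀ e₀, stA b₀) : Bas ends)
      = c p * if ((p.1 = e₀ ∧ p.2.1 = e₀) ∨ (p.1 = e₀ ∧ p.2.1 = e₀)) ∧ p.2.2 = b₀ then 1 else 0 := by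
    intro p
    rw [Finsupp.smul_apply, Finsupp.single_apply, smul_eq_mul]
    congr 1
    apply if_congr ?_ rfl rfl
    rw [Prod.mk.injEq, m2_eq_iff, stA_inj]
  simp only [key]
  exact sum_diag12 c e₀ b₀

lemma eval_SBz_B (c : T3 → ℤ) (e₀ b₀ : Fin 4) :
    (SBz c) ((m1 e₀, stB b₀) : Bas ends) = ∑ a : Fin 4, c (e₀, a, b₀) := by
  unfold SBz
  rw [Finset.sum_apply']
  have key : ∀ p : T3, (c p • Finsupp.single ((m1 p.1, stB p.2.2) : Bas ends) (1:ℤ))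
        ((m1 e₀, stB b₀) : Bas ends)
      = c p * if p.1 = e₀ ∧ p.2.2 = b₀ then 1 else 0 := by
    intro p
    rw [Finsupp.smul_apply, Finsupp.single_apply, smul_eq_mul]
    congr 1
    apply if_congr ?_ rfl rfl
    rw [Prod.mk.injEq, m1_inj, stB_inj]
  simp only [key]
  exact sum_ite_13 c e₀ b₀

lemma eval_SCz_C (c : T3 → ℤ) (e₀ a₀ b₀ : Fin 4) (hne : e₀ ≠ b₀) :
    (SCz c) ((m2 e₀ b₀, stC a₀) : Bas ends) = c (e₀, a₀, b₀) + c (b₀, a₀, e₀) := by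
  unfold SCz
  rw [Finset.sum_apply']
  have key : ∀ p : T3, (c p • Finsupp.single ((m2 p.1 p.2.2, stC p.2.1) : Bas ends) (1:ℤ))
        ((m2 e₀ b₀, stC a₀) : Bas ends)
      = c p * if ((p.1 = e₀ ∧ p.2.2 = b₀) ∨ (p.1 = b₀ ∧ p.2.2 = e₀)) ∧ p.2.1 = a₀ then 1 else 0 := by
    intro p
    rw [Finsupp.smul_apply, Finsupp.single_apply, smul_eq_mul]
    congr 1
    apply if_congr ?_ rfl rfl
    rw [Prod.mk.injEq, m2_eq_iff, stC_inj]
  simp only [key]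
  exact sum_pair13 c e₀ a₀ b₀ hne

lemma eval_SCz_Cd (c : T3 → ℤ) (e₀ a₀ : Fin 4) :
    (SCz c) ((m2 e₀ e₀, stC a₀) : Bas ends) = c (e₀, a₀, e₀) := by
  unfold SCz
  rw [Finset.sum_apply']
  have key : ∀ p : T3, (c p • Finsupp.single ((m2 p.1 p.2.2, stC p.2.1) : Bas ends) (1:ℤ))
        ((m2 e₀ e₀, stC a₀) : Bas ends)
      = c p * if ((p.1 = e₀ ∧ p.2.2 = e₀) ∨ (p.1 = e₀ ∧ p.2.2 = e₀)) ∧ p.2.1 = a₀ then 1 else 0 := by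
    intro p
    rw [Finsupp.smul_apply, Finsupp.single_apply, smul_eq_mul]
    congr 1
    apply if_congr ?_ rfl rfl
    rw [Prod.mk.injEq, m2_eq_iff, stC_inj]
  simp only [key]
  exact sum_diag13 c e₀ a₀

lemma eval_SDz_D (c : T3 → ℤ) (e₀ a₀ : Fin 4) :
    (SDz c) ((m1 e₀, stD a₀) : Bas ends) = ∑ b : Fin 4, c (e₀, a₀, b) := by
  unfold SDz
  rw [Finset.sum_apply']
  have key : ∀ p : T3, (c p • Finsupp.single ((m1 p.1, stD p.2.1) : Bas ends) (1:ℤ))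
        ((m1 e₀, stD a₀) : Bas ends)
      = c p * if p.1 = e₀ ∧ p.2.1 = a₀ then 1 else 0 := by
    intro p
    rw [Finsupp.smul_apply, Finsupp.single_apply, smul_eq_mul]
    congr 1
    apply if_congr ?_ rfl rfl
    rw [Prod.mk.injEq, m1_inj, stD_inj]
  simp only [key]
  exact sum_ite_12 c e₀ a₀


set_option maxHeartbeats 2000000 in
lemma coeff_formula (c : T3 → ℤ)
    (hD : s1 • SCz c - s1 • SDz c + (s0 • SA c - s0 • SBz c) = 0) :
    ∀ p : T3, c p = c (0, 1, 2) * wp p := by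
  have happ : ∀ t : Bas ends,
      s1 * (SCz c) t - s1 * (SDz c) t + (s0 * (SA c) t - s0 * (SBz c) t) = 0 := by
    intro t
    have h := congrArg (fun y : SC ends => y t) hD
    simpa only [Finsupp.add_apply, Finsupp.sub_apply, Finsupp.smul_apply, Finsupp.coe_zero,
      Pi.zero_apply, smul_eq_mul] using h
  have eqA : ∀ e a b : Fin 4, e ≠ a → c (e, a, b) + c (a, e, b) = 0 := by
    intro e a b hne
    have h := happ ((m2 e a, stA b) : Bas ends)
    rw [eval_SCz_A c e a b, eval_SDz_A c e a b, eval_SA_A c e a b hne, eval_SBz_A c e a b] at h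
    have h2 : s0 * (c (e, a, b) + c (a, e, b)) = 0 := by linarith
    rcases mul_eq_zero.mp h2 with h3 | h3
    · exact absurd h3 s0_ne
    · exact h3
  have eqAd : ∀ e b : Fin 4, c (e, e, b) = 0 := by
    intro e b
    have h := happ ((m2 e e, stA b) : Bas ends)
    rw [eval_SCz_A c e e b, eval_SDz_A c e e b, eval_SA_Ad c e b, eval_SBz_A c e e b] at h
    have h2 : s0 * c (e, e, b) = 0 := by linarith
    rcases mul_eq_zero.mp h2 with h3 | h3
    · exact absurd h3 s0_ne
    · exact h3
  have eqB : ∀ e b : Fin 4,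
      c (e, 0, b) + c (e, 1, b) + c (e, 2, b) + c (e, 3, b) = 0 := by
    intro e b
    have h := happ ((m1 e, stB b) : Bas ends)
    rw [eval_SCz_B c e b, eval_SDz_B c e b, eval_SA_B c e b, eval_SBz_B c e b,
      Fin.sum_univ_four] at h
    have h2 : s0 * (c (e, 0, b) + c (e, 1, b) + c (e, 2, b) + c (e, 3, b)) = 0 := by linarith
    rcases mul_eq_zero.mp h2 with h3 | h3
    · exact absurd h3 s0_ne
    · exact h3
  have eqC : ∀ e a b : Fin 4, e ≠ b → c (e, a, b) + c (b, a, e) = 0 := by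
    intro e a b hne
    have h := happ ((m2 e b, stC a) : Bas ends)
    rw [eval_SCz_C c e a b hne, eval_SDz_C c e a b, eval_SA_C c e a b, eval_SBz_C c e a b] at h
    have h2 : s1 * (c (e, a, b) + c (b, a, e)) = 0 := by linarith
    rcases mul_eq_zero.mp h2 with h3 | h3
    · exact absurd h3 s1_ne
    · exact h3
  have eqCd : ∀ e a : Fin 4, c (e, a, e) = 0 := by
    intro e a
    have h := happ ((m2 e e, stC a) : Bas ends)
    rw [eval_SCz_Cd c e a, eval_SDz_C c e a e, eval_SA_C c e a e, eval_SBz_C c e a e] at h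
    have h2 : s1 * c (e, a, e) = 0 := by linarith
    rcases mul_eq_zero.mp h2 with h3 | h3
    · exact absurd h3 s1_ne
    · exact h3
  have eqD : ∀ e a : Fin 4,
      c (e, a, 0) + c (e, a, 1) + c (e, a, 2) + c (e, a, 3) = 0 := by
    intro e a
    have h := happ ((m1 e, stD a) : Bas ends)
    rw [eval_SCz_D c e a, eval_SDz_D c e a, eval_SA_D c e a, eval_SBz_D c e a,
      Fin.sum_univ_four] at h
    have h2 : s1 * (c (e, a, 0) + c (e, a, 1) + c (e, a, 2) + c (e, a, 3)) = 0 := by linarith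
    rcases mul_eq_zero.mp h2 with h3 | h3
    · exact absurd h3 s1_ne
    · exact h3
  have h12 : ∀ e a b : Fin 4, c (a, e, b) = - c (e, a, b) := by
    intro e a b
    by_cases h : e = a
    · subst h
      rw [eqAd e b]
      omega
    · have := eqA e a b h
      linarith
  have h13 : ∀ e a b : Fin 4, c (b, a, e) = - c (e, a, b) := by
    intro e a b
    by_cases h : e = b
    · subst h
      rw [eqCd e a]
      omega
    · have := eqC e a b h
      linarith
  have h23 : ∀ e a b : Fin 4, c (e, b, a) = - c (e, a, b) := by
    intro e a b
    have t1 := h13 a b e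
    have t2 := h12 b a e
    have t3 := h13 e a b
    linarith
  have hrep : ∀ e a : Fin 4, c (e, a, a) = 0 := by
    intro e a
    have t1 := h23 e a a
    linarith
  have v013 : c (0, 1, 3) = - c (0, 1, 2) := by
    linarith [eqB 0 1, eqAd 0 1, hrep 0 1, h23 0 1 2, h23 0 1 3]
  have v023 : c (0, 2, 3) = c (0, 1, 2) := by
    linarith [eqB 0 3, eqAd 0 3, hrep 0 3, v013]
  have v123 : c (1, 2, 3) = - c (0, 1, 2) := by
    linarith [eqB 1 2, eqAd 1 2, hrep 1 2, h12 0 1 2, h23 1 2 3]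
  have mOne : c (0, 1, 2) * (1 : ℤ) = c (0, 1, 2) := mul_one _
  have mZero : c (0, 1, 2) * (0 : ℤ) = 0 := mul_zero _
  have mNeg : c (0, 1, 2) * (-1 : ℤ) = - c (0, 1, 2) := by ring
  have k000 : c (0, 0, 0) = c (0, 1, 2) * wp (0, 0, 0) := by
    have hw : wp ((0 : Fin 4), (0 : Fin 4), (0 : Fin 4)) = 0 := by decide
    rw [hw]
    linarith [mOne, mZero, mNeg, eqAd 0 0]
  have k001 : c (0, 0, 1) = c (0, 1, 2) * wp (0, 0, 1) := by
    have hw : wp ((0 : Fin 4), (0 : Fin 4), (1 : Fin 4)) = 0 := by decide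
    rw [hw]
    linarith [mOne, mZero, mNeg, eqAd 0 1]
  have k002 : c (0, 0, 2) = c (0, 1, 2) * wp (0, 0, 2) := by
    have hw : wp ((0 : Fin 4), (0 : Fin 4), (2 : Fin 4)) = 0 := by decide
    rw [hw]
    linarith [mOne, mZero, mNeg, eqAd 0 2]
  have k003 : c (0, 0, 3) = c (0, 1, 2) * wp (0, 0, 3) := by
    have hw : wp ((0 : Fin 4), (0 : Fin 4), (3 : Fin 4)) = 0 := by decide
    rw [hw]
    linarith [mOne, mZero, mNeg, eqAd 0 3]
  have k010 : c (0, 1, 0) = c (0, 1, 2) * wp (0, 1, 0) := by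
    have hw : wp ((0 : Fin 4), (1 : Fin 4), (0 : Fin 4)) = 0 := by decide
    rw [hw]
    linarith [mOne, mZero, mNeg, eqCd 0 1]
  have k011 : c (0, 1, 1) = c (0, 1, 2) * wp (0, 1, 1) := by
    have hw : wp ((0 : Fin 4), (1 : Fin 4), (1 : Fin 4)) = 0 := by decide
    rw [hw]
    linarith [mOne, mZero, mNeg, hrep 0 1]
  have k012 : c (0, 1, 2) = c (0, 1, 2) * wp (0, 1, 2) := by
    have hw : wp ((0 : Fin 4), (1 : Fin 4), (2 : Fin 4)) = 1 := by decide
    rw [hw]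
    linarith [mOne, mZero, mNeg]
  have k013 : c (0, 1, 3) = c (0, 1, 2) * wp (0, 1, 3) := by
    have hw : wp ((0 : Fin 4), (1 : Fin 4), (3 : Fin 4)) = -1 := by decide
    rw [hw]
    linarith [mOne, mZero, mNeg, v013]
  have k020 : c (0, 2, 0) = c (0, 1, 2) * wp (0, 2, 0) := by
    have hw : wp ((0 : Fin 4), (2 : Fin 4), (0 : Fin 4)) = 0 := by decide
    rw [hw]
    linarith [mOne, mZero, mNeg, eqCd 0 2]
  have k021 : c (0, 2, 1) = c (0, 1, 2) * wp (0, 2, 1) := by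
    have hw : wp ((0 : Fin 4), (2 : Fin 4), (1 : Fin 4)) = -1 := by decide
    rw [hw]
    linarith [mOne, mZero, mNeg, h23 0 1 2]
  have k022 : c (0, 2, 2) = c (0, 1, 2) * wp (0, 2, 2) := by
    have hw : wp ((0 : Fin 4), (2 : Fin 4), (2 : Fin 4)) = 0 := by decide
    rw [hw]
    linarith [mOne, mZero, mNeg, hrep 0 2]
  have k023 : c (0, 2, 3) = c (0, 1, 2) * wp (0, 2, 3) := by
    have hw : wp ((0 : Fin 4), (2 : Fin 4), (3 : Fin 4)) = 1 := by decide
    rw [hw]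
    linarith [mOne, mZero, mNeg, v023]
  have k030 : c (0, 3, 0) = c (0, 1, 2) * wp (0, 3, 0) := by
    have hw : wp ((0 : Fin 4), (3 : Fin 4), (0 : Fin 4)) = 0 := by decide
    rw [hw]
    linarith [mOne, mZero, mNeg, eqCd 0 3]
  have k031 : c (0, 3, 1) = c (0, 1, 2) * wp (0, 3, 1) := by
    have hw : wp ((0 : Fin 4), (3 : Fin 4), (1 : Fin 4)) = 1 := by decide
    rw [hw]
    linarith [mOne, mZero, mNeg, h23 0 1 3, v013]
  have k032 : c (0, 3, 2) = c (0, 1, 2) * wp (0, 3, 2) := by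
    have hw : wp ((0 : Fin 4), (3 : Fin 4), (2 : Fin 4)) = -1 := by decide
    rw [hw]
    linarith [mOne, mZero, mNeg, h23 0 2 3, v023]
  have k033 : c (0, 3, 3) = c (0, 1, 2) * wp (0, 3, 3) := by
    have hw : wp ((0 : Fin 4), (3 : Fin 4), (3 : Fin 4)) = 0 := by decide
    rw [hw]
    linarith [mOne, mZero, mNeg, hrep 0 3]
  have k100 : c (1, 0, 0) = c (0, 1, 2) * wp (1, 0, 0) := by
    have hw : wp ((1 : Fin 4), (0 : Fin 4), (0 : Fin 4)) = 0 := by decide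
    rw [hw]
    linarith [mOne, mZero, mNeg, hrep 1 0]
  have k101 : c (1, 0, 1) = c (0, 1, 2) * wp (1, 0, 1) := by
    have hw : wp ((1 : Fin 4), (0 : Fin 4), (1 : Fin 4)) = 0 := by decide
    rw [hw]
    linarith [mOne, mZero, mNeg, eqCd 1 0]
  have k102 : c (1, 0, 2) = c (0, 1, 2) * wp (1, 0, 2) := by
    have hw : wp ((1 : Fin 4), (0 : Fin 4), (2 : Fin 4)) = -1 := by decide
    rw [hw]
    linarith [mOne, mZero, mNeg, h12 0 1 2]
  have k103 : c (1, 0, 3) = c (0, 1, 2) * wp (1, 0, 3) := by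
    have hw : wp ((1 : Fin 4), (0 : Fin 4), (3 : Fin 4)) = 1 := by decide
    rw [hw]
    linarith [mOne, mZero, mNeg, h12 0 1 3, v013]
  have k110 : c (1, 1, 0) = c (0, 1, 2) * wp (1, 1, 0) := by
    have hw : wp ((1 : Fin 4), (1 : Fin 4), (0 : Fin 4)) = 0 := by decide
    rw [hw]
    linarith [mOne, mZero, mNeg, eqAd 1 0]
  have k111 : c (1, 1, 1) = c (0, 1, 2) * wp (1, 1, 1) := by
    have hw : wp ((1 : Fin 4), (1 : Fin 4), (1 : Fin 4)) = 0 := by decide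
    rw [hw]
    linarith [mOne, mZero, mNeg, eqAd 1 1]
  have k112 : c (1, 1, 2) = c (0, 1, 2) * wp (1, 1, 2) := by
    have hw : wp ((1 : Fin 4), (1 : Fin 4), (2 : Fin 4)) = 0 := by decide
    rw [hw]
    linarith [mOne, mZero, mNeg, eqAd 1 2]
  have k113 : c (1, 1, 3) = c (0, 1, 2) * wp (1, 1, 3) := by
    have hw : wp ((1 : Fin 4), (1 : Fin 4), (3 : Fin 4)) = 0 := by decide
    rw [hw]
    linarith [mOne, mZero, mNeg, eqAd 1 3]
  have k120 : c (1, 2, 0) = c (0, 1, 2) * wp (1, 2, 0) := by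
    have hw : wp ((1 : Fin 4), (2 : Fin 4), (0 : Fin 4)) = 1 := by decide
    rw [hw]
    linarith [mOne, mZero, mNeg, h23 1 0 2, h12 0 1 2]
  have k121 : c (1, 2, 1) = c (0, 1, 2) * wp (1, 2, 1) := by
    have hw : wp ((1 : Fin 4), (2 : Fin 4), (1 : Fin 4)) = 0 := by decide
    rw [hw]
    linarith [mOne, mZero, mNeg, eqCd 1 2]
  have k122 : c (1, 2, 2) = c (0, 1, 2) * wp (1, 2, 2) := by
    have hw : wp ((1 : Fin 4), (2 : Fin 4), (2 : Fin 4)) = 0 := by decide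
    rw [hw]
    linarith [mOne, mZero, mNeg, hrep 1 2]
  have k123 : c (1, 2, 3) = c (0, 1, 2) * wp (1, 2, 3) := by
    have hw : wp ((1 : Fin 4), (2 : Fin 4), (3 : Fin 4)) = -1 := by decide
    rw [hw]
    linarith [mOne, mZero, mNeg, v123]
  have k130 : c (1, 3, 0) = c (0, 1, 2) * wp (1, 3, 0) := by
    have hw : wp ((1 : Fin 4), (3 : Fin 4), (0 : Fin 4)) = -1 := by decide
    rw [hw]
    linarith [mOne, mZero, mNeg, h23 1 0 3, h12 0 1 3, v013]
  have k131 : c (1, 3, 1) = c (0, 1, 2) * wp (1, 3, 1) := by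
    have hw : wp ((1 : Fin 4), (3 : Fin 4), (1 : Fin 4)) = 0 := by decide
    rw [hw]
    linarith [mOne, mZero, mNeg, eqCd 1 3]
  have k132 : c (1, 3, 2) = c (0, 1, 2) * wp (1, 3, 2) := by
    have hw : wp ((1 : Fin 4), (3 : Fin 4), (2 : Fin 4)) = 1 := by decide
    rw [hw]
    linarith [mOne, mZero, mNeg, h23 1 2 3, v123]
  have k133 : c (1, 3, 3) = c (0, 1, 2) * wp (1, 3, 3) := by
    have hw : wp ((1 : Fin 4), (3 : Fin 4), (3 : Fin 4)) = 0 := by decide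
    rw [hw]
    linarith [mOne, mZero, mNeg, hrep 1 3]
  have k200 : c (2, 0, 0) = c (0, 1, 2) * wp (2, 0, 0) := by
    have hw : wp ((2 : Fin 4), (0 : Fin 4), (0 : Fin 4)) = 0 := by decide
    rw [hw]
    linarith [mOne, mZero, mNeg, hrep 2 0]
  have k201 : c (2, 0, 1) = c (0, 1, 2) * wp (2, 0, 1) := by
    have hw : wp ((2 : Fin 4), (0 : Fin 4), (1 : Fin 4)) = 1 := by decide
    rw [hw]
    linarith [mOne, mZero, mNeg, h12 0 2 1, h23 0 1 2]
  have k202 : c (2, 0, 2) = c (0, 1, 2) * wp (2, 0, 2) := by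
    have hw : wp ((2 : Fin 4), (0 : Fin 4), (2 : Fin 4)) = 0 := by decide
    rw [hw]
    linarith [mOne, mZero, mNeg, eqCd 2 0]
  have k203 : c (2, 0, 3) = c (0, 1, 2) * wp (2, 0, 3) := by
    have hw : wp ((2 : Fin 4), (0 : Fin 4), (3 : Fin 4)) = -1 := by decide
    rw [hw]
    linarith [mOne, mZero, mNeg, h12 0 2 3, v023]
  have k210 : c (2, 1, 0) = c (0, 1, 2) * wp (2, 1, 0) := by
    have hw : wp ((2 : Fin 4), (1 : Fin 4), (0 : Fin 4)) = -1 := by decide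
    rw [hw]
    linarith [mOne, mZero, mNeg, h12 1 2 0, h23 1 0 2, h12 0 1 2]
  have k211 : c (2, 1, 1) = c (0, 1, 2) * wp (2, 1, 1) := by
    have hw : wp ((2 : Fin 4), (1 : Fin 4), (1 : Fin 4)) = 0 := by decide
    rw [hw]
    linarith [mOne, mZero, mNeg, hrep 2 1]
  have k212 : c (2, 1, 2) = c (0, 1, 2) * wp (2, 1, 2) := by
    have hw : wp ((2 : Fin 4), (1 : Fin 4), (2 : Fin 4)) = 0 := by decide
    rw [hw]
    linarith [mOne, mZero, mNeg, eqCd 2 1]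
  have k213 : c (2, 1, 3) = c (0, 1, 2) * wp (2, 1, 3) := by
    have hw : wp ((2 : Fin 4), (1 : Fin 4), (3 : Fin 4)) = 1 := by decide
    rw [hw]
    linarith [mOne, mZero, mNeg, h12 1 2 3, v123]
  have k220 : c (2, 2, 0) = c (0, 1, 2) * wp (2, 2, 0) := by
    have hw : wp ((2 : Fin 4), (2 : Fin 4), (0 : Fin 4)) = 0 := by decide
    rw [hw]
    linarith [mOne, mZero, mNeg, eqAd 2 0]
  have k221 : c (2, 2, 1) = c (0, 1, 2) * wp (2, 2, 1) := by
    have hw : wp ((2 : Fin 4), (2 : Fin 4), (1 : Fin 4)) = 0 := by decide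
    rw [hw]
    linarith [mOne, mZero, mNeg, eqAd 2 1]
  have k222 : c (2, 2, 2) = c (0, 1, 2) * wp (2, 2, 2) := by
    have hw : wp ((2 : Fin 4), (2 : Fin 4), (2 : Fin 4)) = 0 := by decide
    rw [hw]
    linarith [mOne, mZero, mNeg, eqAd 2 2]
  have k223 : c (2, 2, 3) = c (0, 1, 2) * wp (2, 2, 3) := by
    have hw : wp ((2 : Fin 4), (2 : Fin 4), (3 : Fin 4)) = 0 := by decide
    rw [hw]
    linarith [mOne, mZero, mNeg, eqAd 2 3]
  have k230 : c (2, 3, 0) = c (0, 1, 2) * wp (2, 3, 0) := by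
    have hw : wp ((2 : Fin 4), (3 : Fin 4), (0 : Fin 4)) = 1 := by decide
    rw [hw]
    linarith [mOne, mZero, mNeg, h23 2 0 3, h12 0 2 3, v023]
  have k231 : c (2, 3, 1) = c (0, 1, 2) * wp (2, 3, 1) := by
    have hw : wp ((2 : Fin 4), (3 : Fin 4), (1 : Fin 4)) = -1 := by decide
    rw [hw]
    linarith [mOne, mZero, mNeg, h23 2 1 3, h12 1 2 3, v123]
  have k232 : c (2, 3, 2) = c (0, 1, 2) * wp (2, 3, 2) := by
    have hw : wp ((2 : Fin 4), (3 : Fin 4), (2 : Fin 4)) = 0 := by decide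
    rw [hw]
    linarith [mOne, mZero, mNeg, eqCd 2 3]
  have k233 : c (2, 3, 3) = c (0, 1, 2) * wp (2, 3, 3) := by
    have hw : wp ((2 : Fin 4), (3 : Fin 4), (3 : Fin 4)) = 0 := by decide
    rw [hw]
    linarith [mOne, mZero, mNeg, hrep 2 3]
  have k300 : c (3, 0, 0) = c (0, 1, 2) * wp (3, 0, 0) := by
    have hw : wp ((3 : Fin 4), (0 : Fin 4), (0 : Fin 4)) = 0 := by decide
    rw [hw]
    linarith [mOne, mZero, mNeg, hrep 3 0]
  have k301 : c (3, 0, 1) = c (0, 1, 2) * wp (3, 0, 1) := by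
    have hw : wp ((3 : Fin 4), (0 : Fin 4), (1 : Fin 4)) = -1 := by decide
    rw [hw]
    linarith [mOne, mZero, mNeg, h12 0 3 1, h23 0 1 3, v013]
  have k302 : c (3, 0, 2) = c (0, 1, 2) * wp (3, 0, 2) := by
    have hw : wp ((3 : Fin 4), (0 : Fin 4), (2 : Fin 4)) = 1 := by decide
    rw [hw]
    linarith [mOne, mZero, mNeg, h12 0 3 2, h23 0 2 3, v023]
  have k303 : c (3, 0, 3) = c (0, 1, 2) * wp (3, 0, 3) := by
    have hw : wp ((3 : Fin 4), (0 : Fin 4), (3 : Fin 4)) = 0 := by decide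
    rw [hw]
    linarith [mOne, mZero, mNeg, eqCd 3 0]
  have k310 : c (3, 1, 0) = c (0, 1, 2) * wp (3, 1, 0) := by
    have hw : wp ((3 : Fin 4), (1 : Fin 4), (0 : Fin 4)) = 1 := by decide
    rw [hw]
    linarith [mOne, mZero, mNeg, h12 1 3 0, h23 1 0 3, h12 0 1 3, v013]
  have k311 : c (3, 1, 1) = c (0, 1, 2) * wp (3, 1, 1) := by
    have hw : wp ((3 : Fin 4), (1 : Fin 4), (1 : Fin 4)) = 0 := by decide
    rw [hw]
    linarith [mOne, mZero, mNeg, hrep 3 1]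
  have k312 : c (3, 1, 2) = c (0, 1, 2) * wp (3, 1, 2) := by
    have hw : wp ((3 : Fin 4), (1 : Fin 4), (2 : Fin 4)) = -1 := by decide
    rw [hw]
    linarith [mOne, mZero, mNeg, h12 1 3 2, h23 1 2 3, v123]
  have k313 : c (3, 1, 3) = c (0, 1, 2) * wp (3, 1, 3) := by
    have hw : wp ((3 : Fin 4), (1 : Fin 4), (3 : Fin 4)) = 0 := by decide
    rw [hw]
    linarith [mOne, mZero, mNeg, eqCd 3 1]
  have k320 : c (3, 2, 0) = c (0, 1, 2) * wp (3, 2, 0) := by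
    have hw : wp ((3 : Fin 4), (2 : Fin 4), (0 : Fin 4)) = -1 := by decide
    rw [hw]
    linarith [mOne, mZero, mNeg, h12 2 3 0, h23 2 0 3, h12 0 2 3, v023]
  have k321 : c (3, 2, 1) = c (0, 1, 2) * wp (3, 2, 1) := by
    have hw : wp ((3 : Fin 4), (2 : Fin 4), (1 : Fin 4)) = 1 := by decide
    rw [hw]
    linarith [mOne, mZero, mNeg, h12 2 3 1, h23 2 1 3, h12 1 2 3, v123]
  have k322 : c (3, 2, 2) = c (0, 1, 2) * wp (3, 2, 2) := by
    have hw : wp ((3 : Fin 4), (2 : Fin 4), (2 : Fin 4)) = 0 := by decide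
    rw [hw]
    linarith [mOne, mZero, mNeg, hrep 3 2]
  have k323 : c (3, 2, 3) = c (0, 1, 2) * wp (3, 2, 3) := by
    have hw : wp ((3 : Fin 4), (2 : Fin 4), (3 : Fin 4)) = 0 := by decide
    rw [hw]
    linarith [mOne, mZero, mNeg, eqCd 3 2]
  have k330 : c (3, 3, 0) = c (0, 1, 2) * wp (3, 3, 0) := by
    have hw : wp ((3 : Fin 4), (3 : Fin 4), (0 : Fin 4)) = 0 := by decide
    rw [hw]
    linarith [mOne, mZero, mNeg, eqAd 3 0]
  have k331 : c (3, 3, 1) = c (0, 1, 2) * wp (3, 3, 1) := by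
    have hw : wp ((3 : Fin 4), (3 : Fin 4), (1 : Fin 4)) = 0 := by decide
    rw [hw]
    linarith [mOne, mZero, mNeg, eqAd 3 1]
  have k332 : c (3, 3, 2) = c (0, 1, 2) * wp (3, 3, 2) := by
    have hw : wp ((3 : Fin 4), (3 : Fin 4), (2 : Fin 4)) = 0 := by decide
    rw [hw]
    linarith [mOne, mZero, mNeg, eqAd 3 2]
  have k333 : c (3, 3, 3) = c (0, 1, 2) * wp (3, 3, 3) := by
    have hw : wp ((3 : Fin 4), (3 : Fin 4), (3 : Fin 4)) = 0 := by decide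
    rw [hw]
    linarith [mOne, mZero, mNeg, eqAd 3 3]
  intro p
  obtain ⟨e, a, b⟩ := p
  fin_cases e <;> fin_cases a <;> fin_cases b <;>
    first | exact k000 | exact k001 | exact k002 | exact k003 | exact k010 | exact k011 | exact k012 | exact k013 | exact k020 | exact k021 | exact k022 | exact k023 | exact k030 | exact k031 | exact k032 | exact k033 | exact k100 | exact k101 | exact k102 | exact k103 | exact k110 | exact k111 | exact k112 | exact k113 | exact k120 | exact k121 | exact k122 | exact k123 | exact k130 | exact k131 | exact k132 | exact k133 | exact k200 | exact k201 | exact k202 | exact k203 | exact k210 | exact k211 | exact k212 | exact k213 | exact k220 | exact k221 | exact k222 | exact k223 | exact k230 | exact k231 | exact k232 | exact k233 | exact k300 | exact k301 | exact k302 | exact k303 | exact k310 | exact k311 | exact k312 | exact k313 | exact k320 | exact k321 | exact k322 | exact k323 | exact k330 | exact k331 | exact k332 | exact k333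


lemma zgen_apply (q : T3) : zgen (bas q.1 q.2.1 q.2.2) = wp q := by
  unfold zgen
  rw [Finset.sum_apply']
  rw [Finset.sum_eq_single q]
  · rw [Finsupp.smul_apply, Finsupp.single_apply, if_pos rfl, smul_eq_mul, mul_one]
  · intro p _ hpq
    rw [Finsupp.smul_apply, Finsupp.single_apply, if_neg, smul_eq_mul, mul_zero]
    intro hc
    obtain ⟨he, ha, hb⟩ := bas_inj hc
    apply hpq
    obtain ⟨p1, p2, p3⟩ := p
    obtain ⟨q1, q2, q3⟩ := q
    simp only at he ha hb
    rw [he, ha, hb]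
  · intro hq
    exact absurd (Finset.mem_univ q) hq

lemma zgen_ne : zgen ≠ 0 := by
  intro h
  have := zgen_apply (0, 1, 2)
  rw [h] at this
  have hw : wp ((0 : Fin 4), (1 : Fin 4), (2 : Fin 4)) = 1 := by decide
  rw [hw] at this
  simp at this

set_option maxRecDepth 10000 in
lemma cyc_elem (x : SC ends) (hx : x ∈ cyc ends 2 3) :
    x = x (bas 0 1 2) • zgen := by
  obtain ⟨hker, hdw⟩ := hx
  have hrepr := decomp x hdw
  have hDx : D ends x = 0 := LinearMap.mem_ker.mp hker
  set c : T3 → ℤ := fun p => x (bas p.1 p.2.1 p.2.2) with hc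
  have hD0 : s1 • SCz c - s1 • SDz c + (s0 • SA c - s0 • SBz c) = 0 := by
    rw [← Dx_eq c]
    rw [← hrepr]
    exact hDx
  have hcoeff := coeff_formula c hD0
  conv_lhs => rw [hrepr]
  rw [zgen, Finset.smul_sum]
  apply Finset.sum_congr rfl
  intro p _
  rw [show x (bas p.1 p.2.1 p.2.2) = c p from rfl, hcoeff p,
    show x (bas 0 1 2) = c (0, 1, 2) from rfl, mul_smul]

lemma cyc_eq_span : cyc ends 2 3 = Submodule.span ℤ {zgen} := by
  apply le_antisymm
  · intro x hx
    rw [Submodule.mem_span_singleton]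
    exact ⟨x (bas 0 1 2), (cyc_elem x hx).symm⟩
  · rw [Submodule.span_singleton_le_iff_mem]
    exact zgen_mem

lemma hasDW33_bot : hasDW ends 3 3 = (⊥ : Submodule ℤ (SC ends)) := by
  rw [eq_bot_iff]
  intro x hx
  rw [Submodule.mem_bot]
  ext t
  rw [Finsupp.coe_zero, Pi.zero_apply]
  by_contra hne
  have ht : t ∈ x.support := Finsupp.mem_support_iff.mpr hne
  have hd := (hx t ht).1
  have hle : degB ends t ≤ 2 := by
    rw [degB]
    calc (Finset.univ.filter fun v => (t.2 v).isLeft = true).card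
        ≤ (Finset.univ : Finset Bool).card := Finset.card_filter_le _ _
      _ = 2 := rfl
  omega

lemma bdry_bot : bdry ends 2 3 = (⊥ : Submodule ℤ (SC ends)) := by
  rw [bdry, show (2 : ℕ) + 1 = 3 from rfl, hasDW33_bot, Submodule.map_bot]

/-- The second homology `H₂(B₃(Θ₄))` of the unordered 3-point
configuration space of the theta graph with four edges — computed, via
An–Drummond-Cole–Knudsen/Abrams, as the homology of the Świątkowski complex of
`Θ₄` in homological degree 2 and weight 3 — is free abelian of rank 1,
i.e. isomorphic to `ℤ`. -/
theorem H2_B3_theta4_free_rank_one : Nonempty (Hgr ends 2 3 ≃+ ℤ) := by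
  have hbot : Submodule.comap (cyc ends 2 3).subtype (bdry ends 2 3) = ⊥ := by
    rw [bdry_bot, Submodule.comap_bot, Submodule.ker_subtype]
  have e1 : Hgr ends 2 3 ≃ₗ[ℤ] cyc ends 2 3 :=
    Submodule.quotEquivOfEqBot _ hbot
  have e2 : cyc ends 2 3 ≃ₗ[ℤ] Submodule.span ℤ {zgen} :=
    LinearEquiv.ofEq _ _ cyc_eq_span
  have e3 : ℤ ≃ₗ[ℤ] Submodule.span ℤ {zgen} :=
    LinearEquiv.toSpanNonzeroSingleton ℤ (SC ends) zgen zgen_ne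
  exact ⟨(e1.trans (e2.trans e3.symm)).toAddEquiv⟩

end Theta4
end

section
/- For a biconnected graph Γ and a bivalent 1-cut criterion: a 1-cut of the vertex explosion Γ_w (w a bivalent vertex subdividing an edge e) that is different from the endpoints v, v' of e is also a 1-cut of Γ \ e. -/
namespace GraphCuts

variable {V E : Type}

/-- Adjacency in the complement of the open star of `u`: two vertices distinct
from `u` joined by an edge. -/
def adjAvoiding (ends : E → V × V) (u a b : V) : Prop :=
  a ≠ u ∧ b ≠ u ∧ ∃ e, ends e = (a, b) ∨ ends e = (b, a)

/-- `u` is a 1-cut: the complement of the open star of `u` has at least two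
connected components containing vertices. -/
def IsOneCut (ends : E → V × V) (u : V) : Prop :=
  ∃ a b : V, a ≠ u ∧ b ≠ u ∧
    ¬ Relation.ReflTransGen (adjAvoiding ends u) a b

/-- Plain adjacency in the graph. -/
def adj (ends : E → V × V) (a b : V) : Prop :=
  ∃ e, ends e = (a, b) ∨ ends e = (b, a)

section Subdivide

variable [DecidableEq E] (ends : E → V × V) (e₀ : E)

/-- The endpoint map of the explosion `Γ_w` of a bivalent vertex `w`
subdividing the edge `e₀` of `Γ`: the edge `e₀` is replaced by two tails, one
from `v = (ends e₀).1` to a new leaf `w = Sum.inr false`, and one from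
`v' = (ends e₀).2` to a new leaf `w' = Sum.inr true`. -/
def endsW : E ⊕ Unit → (V ⊕ Bool) × (V ⊕ Bool) := fun x =>
  match x with
  | Sum.inl e =>
      if e = e₀ then (Sum.inl (ends e₀).1, Sum.inr false)
      else (Sum.inl (ends e).1, Sum.inl (ends e).2)
  | Sum.inr _ => (Sum.inl (ends e₀).2, Sum.inr true)

/-- The endpoint map of `Γ_e = Γ ∖ e₀`, the graph with the open edge `e₀`
removed. -/
def endsE : {e : E // e ≠ e₀} → V × V := fun e => ends e.1

end Subdivide

/-- Let `Γ` be a connected graph, `e₀` an edge with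
distinct endpoints `v, v'`, `w` a bivalent vertex subdividing `e₀`, so that
the explosion `Γ_w` replaces `e₀` by two tails at `v` and `v'`.  Then a 1-cut
of `Γ_w` different from `v` and `v'` is also a 1-cut of `Γ ∖ e₀`. -/
theorem oneCut_of_explosion_is_oneCut_of_deletion [DecidableEq E]
    (ends : E → V × V) (e₀ : E)
    (hvv' : (ends e₀).1 ≠ (ends e₀).2)
    (hconn : ∀ a b : V, Relation.ReflTransGen (adj ends) a b)
    (u : V) (hu : u ≠ (ends e₀).1) (hu' : u ≠ (ends e₀).2)
    (hcut : IsOneCut (endsW ends e₀) (Sum.inl u)) :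
    IsOneCut (endsE ends e₀) u := by
  obtain ⟨a, b, ha, hb, hab⟩ := hcut
  have hsymm : Symmetric (adjAvoiding (endsW ends e₀) (Sum.inl u)) := by
    rintro x y ⟨hx, hy, e, h | h⟩
    · exact ⟨hy, hx, e, Or.inr h⟩
    · exact ⟨hy, hx, e, Or.inl h⟩
  have reduce : ∀ x : V ⊕ Bool, x ≠ Sum.inl u →
      ∃ x' : V, x' ≠ u ∧
        Relation.ReflTransGen (adjAvoiding (endsW ends e₀) (Sum.inl u)) x (Sum.inl x') := by
    rintro (x | c) hx
    · exact ⟨x, fun h => hx (by rw [h]), Relation.ReflTransGen.refl⟩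
    · cases c
      · refine ⟨(ends e₀).1, Ne.symm hu, Relation.ReflTransGen.single ?_⟩
        refine ⟨hx, by simpa using Ne.symm hu, Sum.inl e₀, Or.inr ?_⟩
        simp [endsW]
      · refine ⟨(ends e₀).2, Ne.symm hu', Relation.ReflTransGen.single ?_⟩
        refine ⟨hx, by simpa using Ne.symm hu', Sum.inr (), Or.inr ?_⟩
        simp [endsW]
  have lift : ∀ x y : V, adjAvoiding (endsE ends e₀) u x y →
      adjAvoiding (endsW ends e₀) (Sum.inl u) (Sum.inl x) (Sum.inl y) := by
    rintro x y ⟨hx, hy, ⟨e, he⟩, h⟩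
    refine ⟨by simpa using hx, by simpa using hy, Sum.inl e, ?_⟩
    simp only [endsW, if_neg he]
    rcases h with h | h
    · left; simp [endsE] at h; rw [h]
    · right; simp [endsE] at h; rw [h]
  obtain ⟨a', ha', haa⟩ := reduce a ha
  obtain ⟨b', hb', hbb⟩ := reduce b hb
  refine ⟨a', b', ha', hb', fun hpath => hab ?_⟩
  have hmid := Relation.ReflTransGen.lift (p := adjAvoiding (endsW ends e₀) (Sum.inl u)) (Sum.inl : V → V ⊕ Bool) lift _ _ hpath
  exact haa.trans (hmid.trans (by haveI : Std.Symm (adjAvoiding (endsW ends e₀) (Sum.inl u)) := ⟨fun x y h => hsymm h⟩; exact Std.Symm.symm _ _ hbb))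


end GraphCuts
end
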